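/- arXiv:1207.6735 — 3 statements merged into one kernel-verified Lean document; each statement's English description precedes it below -/
import Mathlib

section
/- Let X ⊆ [0,1] be a bounded set, let f ∈ P(X), δ₀ > 0, p > 0 and ε > 0. Then there exist δ₁ with 0 < δ₁ < δ₀ and g ∈ P(X) with g(x) > 0 for all x ∈ X and sup_{x∈X} |g(x)| < p, such that log N_{δ₁}(g+f) / (−log δ₁) ≥ limsup_{m→∞} log(g_m(X))/log m − ε. -/
open Set Filter

noncomputable section

/-- Number of cubes `[nδ,(n+1)δ]` of the standard `δ`-grid in `ℝ` meeting `E`. -/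
def boxCount (δ : ℝ) (E : Set ℝ) : ℕ :=
  Set.ncard {n : ℤ | (Set.Icc ((n : ℝ) * δ) ((n + 1) * δ) ∩ E).Nonempty}

/-- Number of cubes of the standard `δ`-grid in `ℝ²` meeting `E`. -/
def boxCount2 (δ : ℝ) (E : Set (ℝ × ℝ)) : ℕ :=
  Set.ncard {p : ℤ × ℤ |
    ((Set.Icc ((p.1 : ℝ) * δ) ((p.1 + 1) * δ) ×ˢ
      Set.Icc ((p.2 : ℝ) * δ) ((p.2 + 1) * δ)) ∩ E).Nonempty}

/-- Upper box dimension of a set `E ⊆ ℝ`. -/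
def upperBoxDim (E : Set ℝ) : ℝ :=
  Filter.limsup (fun δ : ℝ => Real.log (boxCount δ E) / (-Real.log δ))
    (nhdsWithin 0 (Set.Ioi 0))

/-- Upper box dimension of a set `E ⊆ ℝ²`. -/
def upperBoxDim2 (E : Set (ℝ × ℝ)) : ℝ :=
  Filter.limsup (fun δ : ℝ => Real.log (boxCount2 δ E) / (-Real.log δ))
    (nhdsWithin 0 (Set.Ioi 0))

/-- The graph of `f` over `X`, as a subset of `ℝ²`. -/
def graphOver (f : ℝ → ℝ) (X : Set ℝ) : Set (ℝ × ℝ) :=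
  {p : ℝ × ℝ | p.1 ∈ X ∧ p.2 = f p.1}

/-- `f` is (the restriction to `X` of) a bounded uniformly continuous function on `X`,
i.e. `f ∈ C_u(X)`. -/
def MemCu (f : ℝ → ℝ) (X : Set ℝ) : Prop :=
  UniformContinuousOn f X ∧ ∃ M : ℝ, ∀ x ∈ X, |f x| ≤ M

/-- The upper graph box dimension of `X`:
the supremum of the upper box dimensions of graphs of functions in `C_u(X)`. -/
def upperGraphBoxDim (X : Set ℝ) : ℝ :=
  sSup {d : ℝ | ∃ f : ℝ → ℝ, MemCu f X ∧ d = upperBoxDim2 (graphOver f X)}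

/-- `g_m(X) = Σ_{k=1}^m min{m, #(X ∩ [(k-1)/m, k/m])}`. -/
def gseq (X : Set ℝ) (m : ℕ) : ℕ :=
  ∑ k ∈ Finset.Icc 1 m,
    (min (m : ℕ∞) ((X ∩ Set.Icc (((k : ℝ) - 1) / m) ((k : ℝ) / m)).encard)).toNat

/-- `N_δ(f)` for a function `f` defined on `X`: the number of half-open grid squares
`[iδ,(i+1)δ) × [jδ,(j+1)δ)`, `i,j ∈ ℤ`, meeting the graph of `f` over `X`. -/
def gridCountGraph (δ : ℝ) (f : ℝ → ℝ) (X : Set ℝ) : ℕ :=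
  Set.ncard {p : ℤ × ℤ | ∃ x ∈ X,
    x ∈ Set.Ico ((p.1 : ℝ) * δ) ((p.1 + 1) * δ) ∧
    f x ∈ Set.Ico ((p.2 : ℝ) * δ) ((p.2 + 1) * δ)}

/-- A continuous piecewise-linear (polygonal) function on `[0,1]`. -/
def IsPolygonal (F : ℝ → ℝ) : Prop :=
  ContinuousOn F (Set.Icc 0 1) ∧
  ∃ (n : ℕ) (t : ℕ → ℝ), 0 < n ∧ t 0 = 0 ∧ t n = 1 ∧
    (∀ i < n, t i < t (i + 1)) ∧
    ∀ i < n, ∃ a b : ℝ, ∀ x ∈ Set.Icc (t i) (t (i + 1)), F x = a * x + b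

/-- `g ∈ P(X)`: `g` agrees on `X` with a polygonal function on `[0,1]`. -/
def MemPX (g : ℝ → ℝ) (X : Set ℝ) : Prop :=
  ∃ F : ℝ → ℝ, IsPolygonal F ∧ Set.EqOn g F X




/-- Piecewise linear interpolation through nodes `t 0 < ... < t n` with values `w i`,
written as a sum of clamped linear pieces (hence globally continuous). -/
def pwl (n : ℕ) (t w : ℕ → ℝ) (x : ℝ) : ℝ :=
  w 0 + ∑ i ∈ Finset.range n,
    (w (i + 1) - w i) / (t (i + 1) - t i) * (min (max x (t i)) (t (i + 1)) - t i)

theorem pwl_continuous (n : ℕ) (t w : ℕ → ℝ) : Continuous (pwl n t w) := by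
  unfold pwl
  refine continuous_const.add (continuous_finset_sum _ fun i _ => Continuous.mul ?_ ?_)
  · exact continuous_const
  · exact (((continuous_id.max continuous_const).min continuous_const).sub continuous_const)

section pwlLemmas

variable {n : ℕ} {t w : ℕ → ℝ} (ht : ∀ i < n, t i < t (i + 1))

theorem t_mono (ht : ∀ i < n, t i < t (i + 1)) :
    ∀ i j, i ≤ j → j ≤ n → t i ≤ t j := by
  intro i j hij hjn
  induction hij with
  | refl => exact le_refl _
  | @step j' h IH =>
    exact le_trans (IH (by omega)) (ht j' (by omega)).le

theorem pwl_node (ht : ∀ i < n, t i < t (i + 1)) {j : ℕ} (hj : j ≤ n) :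
    pwl n t w (t j) = w j := by
  have hsum : ∀ i ∈ Finset.range n,
      (w (i + 1) - w i) / (t (i + 1) - t i) * (min (max (t j) (t i)) (t (i + 1)) - t i)
        = if i < j then w (i + 1) - w i else 0 := by
    intro i hi
    rw [Finset.mem_range] at hi
    by_cases hij : i < j
    · have h1 : t i ≤ t j := t_mono ht i j (by omega) hj
      have h2 : t (i + 1) ≤ t j := t_mono ht (i + 1) j (by omega) hj
      have h3 : t i < t (i + 1) := ht i hi
      rw [max_eq_left h1, min_eq_right h2, if_pos hij]
      exact div_mul_cancel₀ _ (ne_of_gt (by linarith : (0:ℝ) < t (i + 1) - t i))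
    · have h1 : t j ≤ t i := t_mono ht j i (by omega) (by omega)
      have h3 : t i ≤ t (i + 1) := (ht i hi).le
      rw [max_eq_right h1, min_eq_left h3, if_neg hij]
      ring
  rw [pwl, Finset.sum_congr rfl hsum, Finset.sum_ite, Finset.sum_const_zero, add_zero]
  have : Finset.filter (fun i => i < j) (Finset.range n) = Finset.range j := by
    ext i; simp only [Finset.mem_filter, Finset.mem_range]; omega
  rw [this, Finset.sum_range_sub]
  ring

theorem pwl_piece (ht : ∀ i < n, t i < t (i + 1)) {j : ℕ} (hj : j < n) {x : ℝ}
    (hx : x ∈ Set.Icc (t j) (t (j + 1))) :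
    pwl n t w x = w j + (w (j + 1) - w j) / (t (j + 1) - t j) * (x - t j) := by
  obtain ⟨hx1, hx2⟩ := hx
  have hsum : ∀ i ∈ Finset.range n,
      (w (i + 1) - w i) / (t (i + 1) - t i) * (min (max x (t i)) (t (i + 1)) - t i)
        = (if i < j then w (i + 1) - w i else 0) +
          (if i = j then (w (j + 1) - w j) / (t (j + 1) - t j) * (x - t j) else 0) := by
    intro i hi
    rw [Finset.mem_range] at hi
    rcases lt_trichotomy i j with hij | rfl | hij
    · have h1 : t i ≤ x := le_trans (t_mono ht i j (by omega) (by omega)) hx1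
      have h2 : t (i + 1) ≤ x := le_trans (t_mono ht (i + 1) j (by omega) (by omega)) hx1
      have h3 : t i < t (i + 1) := ht i hi
      rw [max_eq_left h1, min_eq_right h2, if_pos hij, if_neg (by omega), add_zero]
      exact div_mul_cancel₀ _ (ne_of_gt (by linarith : (0:ℝ) < t (i + 1) - t i))
    · have h1 : t i ≤ x := hx1
      have h2 : x ≤ t (i + 1) := hx2
      rw [max_eq_left h1, min_eq_left h2, if_neg (by omega), if_pos rfl]
      ring
    · have h1 : x ≤ t i := le_trans hx2 (t_mono ht (j + 1) i (by omega) (by omega))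
      have h3 : t i ≤ t (i + 1) := (ht i hi).le
      rw [max_eq_right h1, min_eq_left h3, if_neg (by omega), if_neg (by omega)]
      ring
  rw [pwl, Finset.sum_congr rfl hsum, Finset.sum_add_distrib, Finset.sum_ite,
    Finset.sum_const_zero, add_zero, Finset.sum_ite_eq' (Finset.range n) j]
  have : Finset.filter (fun i => i < j) (Finset.range n) = Finset.range j := by
    ext i; simp only [Finset.mem_filter, Finset.mem_range]; omega
  rw [this, Finset.sum_range_sub, if_pos (Finset.mem_range.2 hj)]
  ring

theorem pwl_bounds (ht : ∀ i < n, t i < t (i + 1)) {j : ℕ} (hj : j < n) {x : ℝ}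
    (hx : x ∈ Set.Icc (t j) (t (j + 1))) :
    min (w j) (w (j + 1)) ≤ pwl n t w x ∧ pwl n t w x ≤ max (w j) (w (j + 1)) := by
  rw [pwl_piece ht hj hx]
  obtain ⟨hx1, hx2⟩ := hx
  have hd : (0:ℝ) < t (j + 1) - t j := by linarith [ht j hj]
  set q : ℝ := (x - t j) / (t (j + 1) - t j) with hq
  have hq0 : 0 ≤ q := div_nonneg (by linarith) hd.le
  have hq1 : q ≤ 1 := (div_le_one hd).2 (by linarith)
  have hrw : w j + (w (j + 1) - w j) / (t (j + 1) - t j) * (x - t j)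
      = w j + (w (j + 1) - w j) * q := by rw [hq]; ring
  rw [hrw]
  rcases le_total (w j) (w (j + 1)) with h | h
  · rw [min_eq_left h, max_eq_right h]
    constructor <;> nlinarith
  · rw [min_eq_right h, max_eq_left h]
    constructor <;> nlinarith

theorem pwl_exists_piece (ht : ∀ i < n, t i < t (i + 1)) (hn : 0 < n) {x : ℝ}
    (hx : x ∈ Set.Icc (t 0) (t n)) : ∃ j < n, x ∈ Set.Icc (t j) (t (j + 1)) := by
  induction n with
  | zero => omega
  | succ n IH =>
    rcases le_or_gt x (t n) with h | h
    · rcases Nat.eq_zero_or_pos n with rfl | hn'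
      · exact ⟨0, by omega, hx.1, hx.2⟩
      · obtain ⟨j, hj, hmem⟩ := IH (fun i hi => ht i (by omega)) hn' ⟨hx.1, h⟩
        exact ⟨j, by omega, hmem⟩
    · exact ⟨n, by omega, h.le, hx.2⟩

end pwlLemmas


theorem nat_min_mul {K m c : ℕ} (h : K ≤ m) : K * min m c ≤ m * min K c := by
  rcases le_total c K with h' | h'
  · rw [min_eq_right (h'.trans h), min_eq_right h']
    exact Nat.mul_le_mul_right c h
  · rw [min_eq_left h']
    calc K * min m c ≤ K * m := Nat.mul_le_mul_left K (min_le_left m c)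
    _ = m * K := Nat.mul_comm K m

theorem enat_min_mul {K m : ℕ} (h : K ≤ m) (a : ℕ∞) :
    K * (min (m : ℕ∞) a).toNat ≤ m * (min (K : ℕ∞) a).toNat := by
  induction a using ENat.recTopCoe with
  | top => simp [min_eq_left (le_top : (m:ℕ∞) ≤ ⊤), min_eq_left (le_top : (K:ℕ∞) ≤ ⊤),
      Nat.mul_comm K m]
  | coe c =>
    have h1 : (min (m : ℕ∞) (c : ℕ∞)) = ((min m c : ℕ) : ℕ∞) := by norm_cast
    have h2 : (min (K : ℕ∞) (c : ℕ∞)) = ((min K c : ℕ) : ℕ∞) := by norm_cast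
    rw [h1, h2, ENat.toNat_coe, ENat.toNat_coe]
    exact nat_min_mul h

theorem toNat_min_le_add {m e : ℕ} {a b : ℕ∞} (h : a ≤ b + e) :
    (min (m : ℕ∞) a).toNat ≤ (min (m : ℕ∞) b).toNat + e := by
  have key : min (m : ℕ∞) a ≤ min (m : ℕ∞) b + e := by
    rcases le_total (m : ℕ∞) b with hb | hb
    · rw [min_eq_left hb]
      exact le_trans (min_le_left _ _) (le_add_right (le_refl _))
    · rw [min_eq_right hb]
      exact le_trans (min_le_right _ _) h
  have hm : min (m : ℕ∞) b ≠ ⊤ := ne_top_of_le_ne_top (ENat.coe_ne_top m) (min_le_left _ _)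
  have hsum : min (m : ℕ∞) b + (e : ℕ∞) ≠ ⊤ := by
    intro hc
    rcases WithTop.add_eq_top.mp hc with h1 | h2
    · exact hm h1
    · exact ENat.coe_ne_top e h2
  have := ENat.toNat_le_toNat key hsum
  rwa [ENat.toNat_add hm (ENat.coe_ne_top e), ENat.toNat_coe] at this

theorem toNat_min_le (m : ℕ) {a b : ℕ∞} (h : a ≤ b) :
    (min (m : ℕ∞) a).toNat ≤ (min (m : ℕ∞) b).toNat := by
  have hne : min (m : ℕ∞) b ≠ ⊤ := by
    exact ne_top_of_le_ne_top (ENat.coe_ne_top m) (min_le_left _ _)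
  exact ENat.toNat_le_toNat (min_le_min (le_refl _) h) hne

theorem toNat_min_le_self (m : ℕ) (a : ℕ∞) : (min (m : ℕ∞) a).toNat ≤ m := by
  have hne : ((m:ℕ∞)).toNat = m := ENat.toNat_coe m
  calc (min (m : ℕ∞) a).toNat ≤ ((m:ℕ∞)).toNat :=
    ENat.toNat_le_toNat (min_le_left _ _) (ENat.coe_ne_top m)
  _ = m := hne

set_option maxHeartbeats 2000000 in
theorem key_construction (X : Set ℝ) (hX : X ⊆ Set.Icc 0 1) (x₀ : ℝ) (hx₀ : x₀ ∈ X)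
    (f : ℝ → ℝ) (M : ℝ) (hfM : ∀ x ∈ X, |f x| ≤ M)
    (m K : ℕ) (hm : 1 ≤ m) (hK1 : 1 ≤ K) (hKm : K ≤ m)
    (p : ℝ) (hp : 0 < p) (hpm : (2 * K + 2 : ℝ) / m ≤ p / 2) :
    ∃ g : ℝ → ℝ, MemPX g X ∧ (∀ x ∈ X, 0 < g x) ∧ (∀ x ∈ X, |g x| ≤ p / 2) ∧
      K * gseq X m ≤ 3 * m * gridCountGraph (1 / m) (g + f) X := by
  classical
  have hm0 : (0:ℝ) < m := by exact_mod_cast hm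
  -- columns
  set c : ℕ → Set ℝ := fun k => X ∩ Set.Ico (((k:ℝ) - 1)/m) ((k:ℝ)/m) with hc
  have hTex : ∀ k, ∃ T, T ⊆ c k ∧ T.encard = min (K:ℕ∞) ((c k).encard) :=
    fun k => Set.exists_subset_encard_eq (min_le_right _ _)
  choose T hTsub hTcard using hTex
  have hTfin : ∀ k, (T k).Finite := fun k =>
    Set.finite_of_encard_le_coe (by rw [hTcard]; exact min_le_left _ _)
  set F : ℕ → Finset ℝ := fun k => (hTfin k).toFinset with hF
  have hFmem : ∀ k x, x ∈ F k ↔ x ∈ T k := fun k x => Set.Finite.mem_toFinset _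
  have hFcard : ∀ k, ((F k).card : ℕ∞) = min (K:ℕ∞) ((c k).encard) := by
    intro k
    rw [← hTcard k, ← Set.Finite.encard_eq_coe_toFinset_card (hTfin k)]
  have hFcardK : ∀ k, (F k).card ≤ K := by
    intro k
    have := hFcard k
    have h2 : ((F k).card : ℕ∞) ≤ (K:ℕ∞) := this ▸ min_le_left _ _
    exact_mod_cast h2
  have hFX : ∀ k, ∀ x ∈ F k, x ∈ X := fun k x hx => (hTsub k ((hFmem k x).1 hx)).1
  have hFIco : ∀ k, ∀ x ∈ F k, ((k:ℝ)-1)/m ≤ x ∧ x < (k:ℝ)/m := by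
    intro k x hx
    have := (hTsub k ((hFmem k x).1 hx)).2
    exact ⟨this.1, this.2⟩
  have hfloor : ∀ k, 1 ≤ k → k ≤ m → ∀ x ∈ F k, ⌊x * m⌋ = (k:ℤ) - 1 := by
    intro k hk1 hkm x hx
    obtain ⟨h1, h2⟩ := hFIco k x hx
    rw [Int.floor_eq_iff]
    constructor
    · push_cast
      rw [div_le_iff₀ hm0] at h1
      linarith
    · push_cast
      rw [lt_div_iff₀ hm0] at h2
      linarith
  -- key order and ranks
  set klt : ℝ → ℝ → Prop := fun a b => f a < f b ∨ (f a = f b ∧ a < b) with hklt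
  have klt_irrefl : ∀ a, ¬ klt a a := by
    intro a h
    rcases h with h | ⟨_, h⟩ <;> exact lt_irrefl _ h
  have klt_trans : ∀ a b d, klt a b → klt b d → klt a d := by
    intro a b d h1 h2
    rcases h1 with h1 | ⟨e1, h1⟩ <;> rcases h2 with h2 | ⟨e2, h2⟩
    · exact Or.inl (h1.trans h2)
    · exact Or.inl (e2 ▸ h1)
    · exact Or.inl (e1 ▸ h2)
    · exact Or.inr ⟨e1.trans e2, h1.trans h2⟩
  have klt_tri : ∀ a b, a ≠ b → klt a b ∨ klt b a := by
    intro a b hab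
    rcases lt_trichotomy (f a) (f b) with h | h | h
    · exact Or.inl (Or.inl h)
    · rcases lt_trichotomy a b with h' | h' | h'
      · exact Or.inl (Or.inr ⟨h, h'⟩)
      · exact absurd h' hab
      · exact Or.inr (Or.inr ⟨h.symm, h'⟩)
    · exact Or.inr (Or.inl h)
  set A : ℝ → ℕ := fun x => ((F (⌊x * m⌋.toNat + 1)).filter (fun y => klt y x)).card + 1 with hA
  set U : Finset ℝ := (Finset.Icc 1 m).biUnion F with hU
  have hUmem : ∀ x, x ∈ U ↔ ∃ k, (1 ≤ k ∧ k ≤ m) ∧ x ∈ F k := by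
    intro x
    rw [hU, Finset.mem_biUnion]
    constructor
    · rintro ⟨k, hk, hx⟩
      exact ⟨k, Finset.mem_Icc.1 hk, hx⟩
    · rintro ⟨k, hk, hx⟩
      exact ⟨k, Finset.mem_Icc.2 hk, hx⟩
  have hκ : ∀ k, 1 ≤ k → k ≤ m → ∀ x ∈ F k, ⌊x * m⌋.toNat + 1 = k := by
    intro k hk1 hkm x hx
    have := hfloor k hk1 hkm x hx
    omega
  have hAval : ∀ k, 1 ≤ k → k ≤ m → ∀ x ∈ F k,
      A x = ((F k).filter (fun y => klt y x)).card + 1 := by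
    intro k hk1 hkm x hx
    rw [hA]
    simp only
    rw [hκ k hk1 hkm x hx]
  have hAbounds : ∀ k, 1 ≤ k → k ≤ m → ∀ x ∈ F k, 1 ≤ A x ∧ A x ≤ K := by
    intro k hk1 hkm x hx
    rw [hAval k hk1 hkm x hx]
    refine ⟨by omega, ?_⟩
    have hsub : (F k).filter (fun y => klt y x) ⊆ (F k).erase x := by
      intro y hy
      rw [Finset.mem_filter] at hy
      refine Finset.mem_erase.2 ⟨?_, hy.1⟩
      intro hyx
      exact klt_irrefl x (hyx ▸ hy.2)
    have h1 := Finset.card_le_card hsub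
    have h2 := Finset.card_erase_of_mem hx
    have h3 : 1 ≤ (F k).card := Finset.card_pos.2 ⟨x, hx⟩
    have := hFcardK k
    omega
  -- the value function
  set v : ℝ → ℝ := fun x =>
    if x ∈ U then (⌈(m:ℝ) * f x⌉ : ℝ)/m + 2*(A x)/m + 1/(2*m) - f x else 1/(2*m) with hv
  have hv_bounds : ∀ x, 0 < v x ∧ v x ≤ p / 2 := by
    intro x
    rw [hv]
    simp only
    by_cases hx : x ∈ U
    · rw [if_pos hx]
      obtain ⟨k, ⟨hk1, hkm⟩, hxk⟩ := (hUmem x).1 hx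
      obtain ⟨hA1, hAK⟩ := hAbounds k hk1 hkm x hxk
      have hceil1 : (m:ℝ) * f x ≤ (⌈(m:ℝ) * f x⌉ : ℝ) := Int.le_ceil _
      have hceil2 : (⌈(m:ℝ) * f x⌉ : ℝ) < (m:ℝ) * f x + 1 := Int.ceil_lt_add_one _
      have hA1' : (1:ℝ) ≤ (A x : ℝ) := by exact_mod_cast hA1
      have hAK' : ((A x : ℕ) : ℝ) ≤ (K : ℝ) := by exact_mod_cast hAK
      constructor
      · have e1 : f x ≤ (⌈(m:ℝ) * f x⌉ : ℝ)/m := by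
          rw [le_div_iff₀ hm0]; linarith
        have e2 : 0 < 2*(A x : ℝ)/m := by positivity
        have e3 : 0 < 1/(2*(m:ℝ)) := by positivity
        linarith
      · have heq : (⌈(m:ℝ) * f x⌉ : ℝ)/m + 2*(A x)/m + 1/(2*m) - f x
            = ((⌈(m:ℝ) * f x⌉ : ℝ) - m * f x + 2*(A x) + 1/2)/m := by
          field_simp
          ring
        rw [heq]
        refine le_trans (le_trans ?_ hpm) (le_refl _)
        rw [div_le_div_iff₀ hm0 hm0]
        have : (⌈(m:ℝ) * f x⌉ : ℝ) - m * f x + 2*(A x) + 1/2 ≤ 2*K + 2 := by linarith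
        nlinarith [hm0]
    · rw [if_neg hx]
      constructor
      · positivity
      · refine le_trans ?_ hpm
        rw [div_le_div_iff₀ (by linarith) hm0]
        have hK' : (1:ℝ) ≤ K := by exact_mod_cast hK1
        nlinarith
  -- node set
  set D : Finset ℝ := insert 0 (insert 1 U) with hD
  have hD0 : (0:ℝ) ∈ D := Finset.mem_insert_self _ _
  have hD1 : (1:ℝ) ∈ D := Finset.mem_insert.2 (Or.inr (Finset.mem_insert_self _ _))
  have hUD : ∀ x ∈ U, x ∈ D := fun x hx =>
    Finset.mem_insert.2 (Or.inr (Finset.mem_insert.2 (Or.inr hx)))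
  have hDsub : ∀ x ∈ D, x ∈ Set.Icc (0:ℝ) 1 := by
    intro x hx
    rcases Finset.mem_insert.1 hx with rfl | hx
    · exact ⟨le_refl _, zero_le_one⟩
    rcases Finset.mem_insert.1 hx with rfl | hx
    · exact ⟨zero_le_one, le_refl _⟩
    obtain ⟨k, _, hxk⟩ := (hUmem x).1 hx
    exact hX (hFX k x hxk)
  have hcard2 : 2 ≤ D.card := by
    have hsub : ({0, 1} : Finset ℝ) ⊆ D := by
      intro x hx
      rcases Finset.mem_insert.1 hx with rfl | hx
      · exact hD0
      · rw [Finset.mem_singleton] at hx; exact hx ▸ hD1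
    have := Finset.card_le_card hsub
    rwa [Finset.card_pair (by norm_num : (0:ℝ) ≠ 1)] at this
  set n : ℕ := D.card - 1 with hn_def
  have hn : 0 < n := by omega
  have hnlt : n < D.card := by omega
  set iso := D.orderIsoOfFin rfl with hiso
  set t : ℕ → ℝ := fun i => (iso ⟨min i n, by omega⟩ : ℝ) with ht_def
  have htmem : ∀ i, t i ∈ D := fun i => (iso _).2
  have htlt : ∀ i < n, t i < t (i+1) := by
    intro i hi
    rw [ht_def]
    simp only
    have : (⟨min i n, by omega⟩ : Fin D.card) < ⟨min (i+1) n, by omega⟩ := by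
      simp only [Fin.mk_lt_mk]
      omega
    exact_mod_cast iso.strictMono this
  have hsurj : ∀ x ∈ D, ∃ j, j ≤ n ∧ t j = x := by
    intro x hx
    refine ⟨(iso.symm ⟨x, hx⟩).1, by omega, ?_⟩
    rw [ht_def]
    simp only
    have hminj : min ((iso.symm ⟨x, hx⟩).1 : ℕ) n = (iso.symm ⟨x, hx⟩).1 := by
      have := (iso.symm ⟨x, hx⟩).2
      omega
    have : (⟨min ((iso.symm ⟨x, hx⟩).1 : ℕ) n, by omega⟩ : Fin D.card) = iso.symm ⟨x, hx⟩ := by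
      apply Fin.ext
      simpa using hminj
    rw [this]
    simp
  have ht0 : t 0 = 0 := by
    obtain ⟨j, hj, hjt⟩ := hsurj 0 hD0
    have h1 : t 0 ≤ t j := t_mono htlt 0 j (by omega) hj
    have h2 : (0:ℝ) ≤ t 0 := (hDsub _ (htmem 0)).1
    rw [hjt] at h1
    linarith
  have htn : t n = 1 := by
    obtain ⟨j, hj, hjt⟩ := hsurj 1 hD1
    have h1 : t j ≤ t n := t_mono htlt j n hj (le_refl _)
    have h2 : t n ≤ 1 := (hDsub _ (htmem n)).2
    rw [hjt] at h1
    linarith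
  set w : ℕ → ℝ := fun i => v (t i) with hw_def
  set g : ℝ → ℝ := pwl n t w with hg
  have hgnode : ∀ x ∈ D, g x = v x := by
    intro x hx
    obtain ⟨j, hj, hjt⟩ := hsurj x hx
    rw [hg, ← hjt, pwl_node htlt hj, hw_def]
  have hgIcc : ∀ x ∈ Set.Icc (0:ℝ) 1, 0 < g x ∧ g x ≤ p/2 := by
    intro x hx
    have hx' : x ∈ Set.Icc (t 0) (t n) := by rw [ht0, htn]; exact hx
    obtain ⟨j, hj, hmem⟩ := pwl_exists_piece htlt hn hx'
    obtain ⟨hlo, hhi⟩ := pwl_bounds (w := w) htlt hj hmem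
    have hwb : ∀ i, 0 < w i ∧ w i ≤ p/2 := fun i => hv_bounds (t i)
    have hgx : g x = pwl n t w x := rfl
    rw [hgx]
    constructor
    · exact lt_of_lt_of_le (lt_min (hwb j).1 (hwb (j+1)).1) hlo
    · exact le_trans hhi (max_le (hwb j).2 (hwb (j+1)).2)
  have hgpoly : MemPX g X := by
    refine ⟨g, ⟨(pwl_continuous n t w).continuousOn, n, t, hn, ht0, htn, htlt, ?_⟩,
      fun x _ => rfl⟩
    intro j hj
    refine ⟨(w (j+1) - w j)/(t (j+1) - t j),
      w j - (w (j+1) - w j)/(t (j+1) - t j) * t j, fun x hx => ?_⟩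
    rw [hg, pwl_piece htlt hj hx]
    ring
  -- the box set
  set δ : ℝ := 1/(m:ℝ) with hδ
  have hδpos : 0 < δ := by positivity
  set box : Set (ℤ × ℤ) := {q : ℤ × ℤ | ∃ x ∈ X,
    x ∈ Set.Ico ((q.1 : ℝ) * δ) ((q.1 + 1) * δ) ∧
    (g + f) x ∈ Set.Ico ((q.2 : ℝ) * δ) ((q.2 + 1) * δ)} with hbox
  have hgrid : gridCountGraph (1/m) (g+f) X = box.ncard := rfl
  have hgfb : ∀ x ∈ X, |(g+f) x| ≤ p/2 + M := by
    intro x hx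
    have h1 := hgIcc x (hX hx)
    have h2 := hfM x hx
    calc |(g+f) x| = |g x + f x| := rfl
    _ ≤ |g x| + |f x| := abs_add_le _ _
    _ ≤ p/2 + M := add_le_add (by rw [abs_of_pos h1.1]; exact h1.2) h2
  -- finiteness of box
  set B : ℝ := p/2 + M with hB
  have hfinbox : box.Finite := by
    apply Set.Finite.subset (Set.finite_Icc ((0:ℤ), ⌈-(B*m)⌉ - 1) ((m:ℤ), ⌈B*m⌉))
    rintro ⟨i, j⟩ ⟨x, hx, ⟨hx1, hx2⟩, ⟨hy1, hy2⟩⟩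
    obtain ⟨hx0, hx1'⟩ := hX hx
    have hgf := hgfb x hx
    rw [abs_le] at hgf
    have hi1 : (0:ℤ) ≤ i := by
      by_contra hcon
      push_neg at hcon
      have : ((i:ℝ) + 1) ≤ 0 := by exact_mod_cast hcon
      have : ((i:ℝ) + 1) * δ ≤ 0 := mul_nonpos_of_nonpos_of_nonneg this hδpos.le
      linarith
    have hi2 : i ≤ (m:ℤ) := by
      have h1 : (i:ℝ) * δ ≤ 1 := le_trans hx1 (le_trans hx1' (le_refl _))
      have h2 : (m:ℝ) * δ = 1 := by rw [hδ]; field_simp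
      have : (i:ℝ) * δ ≤ (m:ℝ) * δ := by rw [h2]; exact h1
      have := le_of_mul_le_mul_right this hδpos
      exact_mod_cast this
    have hj2 : j ≤ ⌈B*m⌉ := by
      have h1 : (j:ℝ) * δ ≤ B := le_trans hy1 hgf.2
      have h2 : (j:ℝ) ≤ B * m := by
        rw [hδ] at h1
        rw [mul_one_div, div_le_iff₀ hm0] at h1
        linarith [h1]
      calc j = ⌈(j:ℝ)⌉ := (Int.ceil_intCast j).symm
      _ ≤ ⌈B*m⌉ := Int.ceil_le_ceil h2
    have hj1 : ⌈-(B*m)⌉ - 1 ≤ j := by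
      have h1 : -B ≤ ((j:ℝ) + 1) * δ := le_trans hgf.1 hy2.le
      have h2 : -(B*m) ≤ (j:ℝ) + 1 := by
        rw [hδ, mul_one_div, le_div_iff₀ hm0] at h1
        linarith
      have h3 : ⌈-(B*m)⌉ ≤ j + 1 := by
        calc ⌈-(B*m)⌉ ≤ ⌈((j:ℝ) + 1)⌉ := Int.ceil_le_ceil h2
        _ = j + 1 := by exact_mod_cast Int.ceil_intCast (j+1)
      omega
    rw [Set.mem_Icc]
    exact ⟨⟨hi1, hj1⟩, ⟨hi2, hj2⟩⟩
  -- floor-interval membership helper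
  have hfloormem : ∀ y : ℝ, y ∈ Set.Ico ((⌊y * m⌋ : ℝ) * δ) ((⌊y * m⌋ + 1) * δ) := by
    intro y
    constructor
    · rw [hδ, mul_one_div, div_le_iff₀ hm0]
      exact Int.floor_le _
    · rw [hδ, mul_one_div, lt_div_iff₀ hm0]
      exact Int.lt_floor_add_one _
  have hN1 : 1 ≤ box.ncard := by
    have hmem : (⌊x₀ * m⌋, ⌊(g+f) x₀ * m⌋) ∈ box := by
      exact ⟨x₀, hx₀, hfloormem x₀, by push_cast; exact hfloormem ((g+f) x₀)⟩
    exact (Set.ncard_pos hfinbox).2 ⟨_, hmem⟩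
  -- the injection
  set Φ : ℝ → ℤ × ℤ := fun x => (⌊x * m⌋, ⌈(m:ℝ) * f x⌉ + 2*(A x : ℤ)) with hΦ
  have hrowlt : ∀ k, 1 ≤ k → k ≤ m → ∀ a ∈ F k, ∀ b ∈ F k, klt a b →
      ⌈(m:ℝ) * f a⌉ + 2*(A a : ℤ) < ⌈(m:ℝ) * f b⌉ + 2*(A b : ℤ) := by
    intro k hk1 hkm a ha b hb hab
    have hAlt : A a < A b := by
      rw [hAval k hk1 hkm a ha, hAval k hk1 hkm b hb]
      have hsub : (F k).filter (fun y => klt y a) ⊆ (F k).filter (fun y => klt y b) := by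
        intro z hz
        rw [Finset.mem_filter] at hz ⊢
        exact ⟨hz.1, klt_trans z a b hz.2 hab⟩
      have hss : (F k).filter (fun y => klt y a) ⊂ (F k).filter (fun y => klt y b) := by
        rw [Finset.ssubset_iff_of_subset hsub]
        exact ⟨a, Finset.mem_filter.2 ⟨ha, hab⟩, fun hcon =>
          klt_irrefl a (Finset.mem_filter.1 hcon).2⟩
      have := Finset.card_lt_card hss
      omega
    have hfle : f a ≤ f b := by
      rcases hab with h | ⟨h, _⟩
      · exact h.le
      · exact h.le
    have hceil : ⌈(m:ℝ) * f a⌉ ≤ ⌈(m:ℝ) * f b⌉ :=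
      Int.ceil_le_ceil (by nlinarith)
    omega
  have hinj : Set.InjOn Φ ↑U := by
    intro x hx y hy hxy
    rw [Finset.mem_coe] at hx hy
    obtain ⟨k, ⟨hk1, hkm⟩, hxk⟩ := (hUmem x).1 hx
    obtain ⟨l, ⟨hl1, hlm⟩, hyl⟩ := (hUmem y).1 hy
    have hcol : ⌊x * m⌋ = ⌊y * m⌋ := congrArg Prod.fst hxy
    have hkl : k = l := by
      have h1 := hfloor k hk1 hkm x hxk
      have h2 := hfloor l hl1 hlm y hyl
      omega
    subst hkl
    by_contra hne
    have hrow : ⌈(m:ℝ) * f x⌉ + 2*(A x : ℤ) = ⌈(m:ℝ) * f y⌉ + 2*(A y : ℤ) :=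
      congrArg Prod.snd hxy
    rcases klt_tri x y hne with h | h
    · exact absurd hrow (ne_of_lt (hrowlt k hk1 hkm x hxk y hyl h))
    · exact absurd hrow.symm (ne_of_lt (hrowlt k hk1 hkm y hyl x hxk h))
  have himg : ∀ x ∈ U, Φ x ∈ box := by
    intro x hx
    obtain ⟨k, ⟨hk1, hkm⟩, hxk⟩ := (hUmem x).1 hx
    refine ⟨x, hFX k x hxk, hfloormem x, ?_⟩
    have hgx : g x = v x := hgnode x (hUD x hx)
    have hvx : v x = (⌈(m:ℝ) * f x⌉ : ℝ)/m + 2*(A x)/m + 1/(2*m) - f x := by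
      rw [hv]; simp only; rw [if_pos hx]
    have hfx : (g + f) x = (⌈(m:ℝ) * f x⌉ : ℝ)/m + 2*(A x)/m + 1/(2*m) := by
      have : (g+f) x = g x + f x := rfl
      rw [this, hgx, hvx]; ring
    have hcast : (((⌈(m:ℝ) * f x⌉ + 2 * (A x : ℤ)) : ℤ) : ℝ)
        = (⌈(m:ℝ) * f x⌉ : ℝ) + 2*(A x : ℝ) := by push_cast; ring
    have hcast1 : (((⌈(m:ℝ) * f x⌉ + 2 * (A x : ℤ)) : ℤ) : ℝ) + 1
        = (⌈(m:ℝ) * f x⌉ : ℝ) + 2*(A x : ℝ) + 1 := by push_cast; ring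
    constructor
    · simp only [hΦ]
      rw [hcast, hfx, hδ]
      have heq : ((⌈(m:ℝ) * f x⌉ : ℝ) + 2*(A x : ℝ)) * (1/(m:ℝ))
          = (⌈(m:ℝ) * f x⌉ : ℝ)/m + 2*(A x : ℝ)/m := by ring
      have hpos : (0:ℝ) < 1/(2*(m:ℝ)) := by positivity
      linarith [heq, hpos]
    · simp only [hΦ]
      rw [hcast1, hfx, hδ]
      have h1 : 1/(2*(m:ℝ)) < 1/m := by
        rw [div_lt_div_iff₀ (by linarith) hm0]
        linarith
      have h2 : ((⌈(m:ℝ) * f x⌉ : ℝ) + 2*(A x : ℝ) + 1) * (1/(m:ℝ))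
          = (⌈(m:ℝ) * f x⌉ : ℝ)/m + 2*(A x : ℝ)/m + 1/m := by ring
      linarith [h1, h2]
  have hdisj : ∀ k₁ ∈ Finset.Icc 1 m, ∀ k₂ ∈ Finset.Icc 1 m, k₁ ≠ k₂ →
      Disjoint (F k₁) (F k₂) := by
    intro k₁ hk₁ k₂ hk₂ hne
    rw [Finset.mem_Icc] at hk₁ hk₂
    rw [Finset.disjoint_left]
    intro x hx1 hx2
    have h1 := hfloor k₁ hk₁.1 hk₁.2 x hx1
    have h2 := hfloor k₂ hk₂.1 hk₂.2 x hx2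
    omega
  have hcount : (∑ k ∈ Finset.Icc 1 m, (F k).card) ≤ box.ncard := by
    calc (∑ k ∈ Finset.Icc 1 m, (F k).card) = U.card := (Finset.card_biUnion hdisj).symm
    _ = (U.image Φ).card := (Finset.card_image_of_injOn hinj).symm
    _ = (↑(U.image Φ) : Set (ℤ × ℤ)).ncard := (Set.ncard_coe_finset _).symm
    _ ≤ box.ncard := by
        apply Set.ncard_le_ncard _ hfinbox
        intro q hq
        rw [Finset.coe_image] at hq
        obtain ⟨x, hx, rfl⟩ := hq
        exact himg x hx
  -- the gseq chain
  set hnum : ℕ → ℕ := fun k => (min (m:ℕ∞) ((c k).encard)).toNat with hhnum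
  set e : ℕ → ℕ := fun k => if (k:ℝ)/m ∈ X then 1 else 0 with he
  have step1 : gseq X m ≤ ∑ k ∈ Finset.Icc 1 m, (hnum k + e k) := by
    apply Finset.sum_le_sum
    intro k hk
    rw [Finset.mem_Icc] at hk
    apply le_trans (toNat_min_le_add (e := e k) ?_) (le_refl _)
    by_cases hkX : (k:ℝ)/m ∈ X
    · have hsub : X ∩ Set.Icc (((k:ℝ) - 1)/m) ((k:ℝ)/m) ⊆ c k ∪ {(k:ℝ)/m} := by
        rintro x ⟨hx1, hx2, hx3⟩
        rcases lt_or_eq_of_le hx3 with h | h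
        · exact Or.inl ⟨hx1, hx2, h⟩
        · exact Or.inr (by simp [h])
      calc (X ∩ Set.Icc (((k:ℝ) - 1)/m) ((k:ℝ)/m)).encard
          ≤ (c k ∪ {(k:ℝ)/m}).encard := Set.encard_mono hsub
      _ ≤ (c k).encard + ({(k:ℝ)/m} : Set ℝ).encard := Set.encard_union_le _ _
      _ ≤ (c k).encard + (e k : ℕ∞) := by
          rw [Set.encard_singleton, he]
          simp [hkX]
    · have hsub : X ∩ Set.Icc (((k:ℝ) - 1)/m) ((k:ℝ)/m) ⊆ c k := by
        rintro x ⟨hx1, hx2, hx3⟩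
        rcases lt_or_eq_of_le hx3 with h | h
        · exact ⟨hx1, hx2, h⟩
        · exact absurd (h ▸ hx1) hkX
      calc (X ∩ Set.Icc (((k:ℝ) - 1)/m) ((k:ℝ)/m)).encard
          ≤ (c k).encard := Set.encard_mono hsub
      _ ≤ (c k).encard + (e k : ℕ∞) := le_self_add
  have step2 : ∑ k ∈ Finset.Icc 1 m, e k ≤ (∑ k ∈ Finset.Icc 1 m, hnum k) + 1 := by
    have hesplit : ∑ k ∈ Finset.Icc 1 m, e k
        = (∑ k ∈ Finset.Icc 1 (m-1), e k) + e m := by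
      have : m = (m - 1) + 1 := by omega
      rw [this]
      rw [Finset.sum_Icc_succ_top (by omega)]
      congr 1 <;> omega
    have hestep : ∀ k, 1 ≤ k → k ≤ m - 1 → e k ≤ hnum (k+1) := by
      intro k hk1 hkm
      rw [he]
      simp only
      by_cases hkX : (k:ℝ)/m ∈ X
      · rw [if_pos hkX]
        have hmem : (k:ℝ)/m ∈ c (k+1) := by
          refine ⟨hkX, ?_, ?_⟩
          · push_cast
            have : ((k:ℝ) + 1 - 1) = (k:ℝ) := by ring
            rw [this]
          · push_cast
            rw [div_lt_div_iff₀ hm0 hm0]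
            nlinarith
        have h1 : 1 ≤ (c (k+1)).encard := Set.one_le_encard_iff_nonempty.2 ⟨_, hmem⟩
        have h2 : (1:ℕ∞) ≤ min (m:ℕ∞) ((c (k+1)).encard) := by
          refine le_min ?_ h1
          exact_mod_cast hm
        rw [hhnum]
        simp only
        have h3 : (min (m:ℕ∞) ((c (k+1)).encard)) ≠ ⊤ :=
          ne_top_of_le_ne_top (ENat.coe_ne_top m) (min_le_left _ _)
        have := ENat.toNat_le_toNat h2 h3
        simpa using this
      · rw [if_neg hkX]
        exact Nat.zero_le _
    have h4 : ∑ k ∈ Finset.Icc 1 (m-1), e k ≤ ∑ k ∈ Finset.Icc 1 (m-1), hnum (k+1) :=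
      Finset.sum_le_sum (fun k hk => by
        rw [Finset.mem_Icc] at hk
        exact hestep k hk.1 hk.2)
    have h5 : ∑ k ∈ Finset.Icc 1 (m-1), hnum (k+1) = ∑ k ∈ Finset.Icc 2 m, hnum k := by
      rw [Finset.sum_bij' (fun k _ => k + 1) (fun k _ => k - 1)]
      · intro a ha
        rw [Finset.mem_Icc] at ha ⊢
        omega
      · intro a ha
        rw [Finset.mem_Icc] at ha ⊢
        omega
      · intro a ha
        rw [Finset.mem_Icc] at ha
        omega
      · intro a ha
        rw [Finset.mem_Icc] at ha
        omega
      · intro a ha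
        rfl
    have h6 : ∑ k ∈ Finset.Icc 2 m, hnum k ≤ ∑ k ∈ Finset.Icc 1 m, hnum k := by
      apply Finset.sum_le_sum_of_subset
      intro a ha
      rw [Finset.mem_Icc] at ha ⊢
      omega
    have h7 : e m ≤ 1 := by
      rw [he]
      simp only
      split <;> omega
    omega
  have step3 : ∀ k, K * hnum k ≤ m * (F k).card := by
    intro k
    have h1 : (F k).card = (min (K:ℕ∞) ((c k).encard)).toNat := by
      have := hFcard k
      have h2 : ((F k).card : ℕ∞).toNat = (min (K:ℕ∞) ((c k).encard)).toNat := by rw [this]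
      simpa using h2
    rw [hhnum, h1]
    exact enat_min_mul hKm _
  -- put it together
  have hfinal : K * gseq X m ≤ 3 * m * box.ncard := by
    have c1 : K * gseq X m ≤ K * (∑ k ∈ Finset.Icc 1 m, (hnum k + e k)) :=
      Nat.mul_le_mul_left K step1
    have c2 : ∑ k ∈ Finset.Icc 1 m, (hnum k + e k)
        ≤ 2 * (∑ k ∈ Finset.Icc 1 m, hnum k) + 1 := by
      rw [Finset.sum_add_distrib]
      omega
    have c3 : K * (2 * (∑ k ∈ Finset.Icc 1 m, hnum k) + 1)
        = 2 * (∑ k ∈ Finset.Icc 1 m, K * hnum k) + K := by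
      rw [← Finset.mul_sum]
      ring
    have c4 : (∑ k ∈ Finset.Icc 1 m, K * hnum k) ≤ ∑ k ∈ Finset.Icc 1 m, m * (F k).card :=
      Finset.sum_le_sum (fun k _ => step3 k)
    have c5 : (∑ k ∈ Finset.Icc 1 m, m * (F k).card)
        = m * ∑ k ∈ Finset.Icc 1 m, (F k).card := by rw [Finset.mul_sum]
    have c6 : m * (∑ k ∈ Finset.Icc 1 m, (F k).card) ≤ m * box.ncard :=
      Nat.mul_le_mul_left m hcount
    have c7 : K ≤ m * box.ncard := by
      calc K ≤ m := hKm
      _ = m * 1 := (Nat.mul_one m).symm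
      _ ≤ m * box.ncard := Nat.mul_le_mul_left m hN1
    calc K * gseq X m ≤ K * (2 * (∑ k ∈ Finset.Icc 1 m, hnum k) + 1) :=
          le_trans c1 (Nat.mul_le_mul_left K c2)
    _ = 2 * (∑ k ∈ Finset.Icc 1 m, K * hnum k) + K := c3
    _ ≤ 2 * (m * box.ncard) + m * box.ncard := by
        have := le_trans c4 (c5 ▸ c6)
        omega
    _ = 3 * m * box.ncard := by ring
  refine ⟨g, hgpoly, fun x hx => (hgIcc x (hX hx)).1, fun x hx => ?_, ?_⟩
  · rw [abs_of_pos (hgIcc x (hX hx)).1]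
    exact (hgIcc x (hX hx)).2
  · rw [hgrid]
    exact hfinal


theorem gseq_pos {X : Set ℝ} (hX : X ⊆ Set.Icc 0 1) {x₀ : ℝ} (hx₀ : x₀ ∈ X) {m : ℕ}
    (hm : 1 ≤ m) : 1 ≤ gseq X m := by
  obtain ⟨hx0, hx1⟩ := hX hx₀
  have hm0 : (0:ℝ) < m := by exact_mod_cast hm
  have hkey : ∃ k : ℕ, (1 ≤ k ∧ k ≤ m) ∧
      x₀ ∈ X ∩ Set.Icc (((k:ℝ) - 1)/(m:ℝ)) ((k:ℝ)/(m:ℝ)) := by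
    by_cases h : x₀ = 0
    · refine ⟨1, ⟨le_refl _, hm⟩, hx₀, ?_, ?_⟩
      · subst h; push_cast; simp
      · subst h; positivity
    · have hpos : 0 < x₀ := lt_of_le_of_ne hx0 (Ne.symm h)
      have hcl : 0 < ⌈x₀ * m⌉ := Int.ceil_pos.2 (by positivity)
      have hcu : ⌈x₀ * m⌉ ≤ (m:ℤ) := Int.ceil_le.2 (by push_cast; nlinarith)
      refine ⟨⌈x₀ * m⌉.toNat, ⟨by omega, by omega⟩, hx₀, ?_, ?_⟩
      · have hc : ((⌈x₀ * m⌉.toNat : ℕ) : ℝ) = ((⌈x₀ * m⌉ : ℤ) : ℝ) := by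
          rw [← Int.cast_natCast]
          exact congrArg Int.cast (Int.toNat_of_nonneg hcl.le)
        rw [hc, div_le_iff₀ hm0]
        have := Int.ceil_lt_add_one (x₀ * m)
        linarith
      · have hc : ((⌈x₀ * m⌉.toNat : ℕ) : ℝ) = ((⌈x₀ * m⌉ : ℤ) : ℝ) := by
          rw [← Int.cast_natCast]
          exact congrArg Int.cast (Int.toNat_of_nonneg hcl.le)
        rw [hc, le_div_iff₀ hm0]
        exact Int.le_ceil _
  obtain ⟨k, ⟨hk1, hkm⟩, hmem⟩ := hkey
  have h1 : 1 ≤ (min (m:ℕ∞) ((X ∩ Set.Icc (((k:ℝ) - 1)/(m:ℝ)) ((k:ℝ)/(m:ℝ))).encard)).toNat := by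
    have he : 1 ≤ (X ∩ Set.Icc (((k:ℝ) - 1)/(m:ℝ)) ((k:ℝ)/(m:ℝ))).encard :=
      Set.one_le_encard_iff_nonempty.2 ⟨x₀, hmem⟩
    have h2 : (1:ℕ∞) ≤ min (m:ℕ∞) _ := le_min (by exact_mod_cast hm) he
    have h3 : (min (m:ℕ∞) ((X ∩ Set.Icc (((k:ℝ) - 1)/(m:ℝ)) ((k:ℝ)/(m:ℝ))).encard)) ≠ ⊤ :=
      ne_top_of_le_ne_top (ENat.coe_ne_top m) (min_le_left _ _)
    have := ENat.toNat_le_toNat h2 h3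
    simpa using this
  have h4 := Finset.single_le_sum (f := fun k : ℕ =>
    (min (m:ℕ∞) ((X ∩ Set.Icc (((k:ℝ) - 1)/(m:ℝ)) ((k:ℝ)/(m:ℝ))).encard)).toNat)
    (fun i _ => Nat.zero_le _) (Finset.mem_Icc.2 ⟨hk1, hkm⟩)
  exact le_trans h1 h4


set_option maxHeartbeats 2000000 in
theorem exists_polygonal_perturbation (X : Set ℝ) (hX : X ⊆ Set.Icc 0 1)
    (f : ℝ → ℝ) (hf : MemPX f X) (δ₀ p ε : ℝ) (hδ₀ : 0 < δ₀) (hp : 0 < p) (hε : 0 < ε) :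
    ∃ δ₁ : ℝ, 0 < δ₁ ∧ δ₁ < δ₀ ∧
      ∃ g : ℝ → ℝ, MemPX g X ∧ (∀ x ∈ X, 0 < g x) ∧ (⨆ x : X, |g x|) < p ∧
        Real.log (gridCountGraph δ₁ (g + f) X) / (-Real.log δ₁) ≥
          Filter.limsup (fun m : ℕ => Real.log (gseq X m) / Real.log m) Filter.atTop - ε := by
  classical
  rcases X.eq_empty_or_nonempty with rfl | ⟨x₀, hx₀⟩
  · refine ⟨min (δ₀/2) (1/2), lt_min (by linarith) one_half_pos,
      lt_of_le_of_lt (min_le_left _ _) (by linarith), fun _ => p/2, ?_, ?_, ?_, ?_⟩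
    · exact ⟨fun _ => p/2, ⟨continuousOn_const, 1, fun i => (i:ℝ), one_pos, by norm_num,
        by norm_num, fun i _ => by push_cast; linarith,
        fun i _ => ⟨0, p/2, fun x _ => by ring⟩⟩, fun x hx => rfl⟩
    · exact fun x hx => absurd hx (Set.notMem_empty x)
    · rw [Real.iSup_of_isEmpty]; exact hp
    · have h1 : gridCountGraph (min (δ₀/2) (1/2)) ((fun _ => p/2) + f) ∅ = 0 := by
        unfold gridCountGraph
        convert Set.ncard_empty (ℤ × ℤ) using 2
        ext q
        simp
      have h2 : (fun m : ℕ => Real.log (gseq ∅ m) / Real.log m) = fun _ => (0:ℝ) := by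
        funext m
        have : gseq ∅ m = 0 := by
          unfold gseq
          apply Finset.sum_eq_zero
          intro k _
          simp [Set.empty_inter]
        rw [this]
        simp
      rw [h1, h2, limsup_const]
      simp only [Nat.cast_zero, Real.log_zero, zero_div, ge_iff_le]
      linarith
  · -- nonempty case
    obtain ⟨Ff, ⟨hFc, _⟩, hEq⟩ := hf
    obtain ⟨M, hM⟩ : ∃ M : ℝ, ∀ x ∈ X, |f x| ≤ M := by
      obtain ⟨M, hM⟩ := (isCompact_Icc (a := (0:ℝ)) (b := 1)).exists_bound_of_continuousOn hFc
      exact ⟨M, fun x hx => by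
        rw [hEq hx, ← Real.norm_eq_abs]; exact hM x (hX hx)⟩
    set u : ℕ → ℝ := fun m => Real.log (gseq X m) / Real.log m with hu
    set L : ℝ := limsup u atTop with hL
    have hu0 : ∀ m, 0 ≤ u m := by
      intro m
      rcases Nat.eq_zero_or_pos m with rfl | hm1
      · rw [hu]; simp
      · rw [hu]
        refine div_nonneg (Real.log_nonneg ?_) (Real.log_nonneg ?_)
        · exact_mod_cast gseq_pos hX hx₀ hm1
        · exact_mod_cast hm1
    have hcb : IsCoboundedUnder (· ≤ ·) atTop u :=
      isCoboundedUnder_le_of_le atTop hu0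
    have hfreq : ∃ᶠ m in atTop, L - ε/2 < u m :=
      frequently_lt_of_lt_limsup hcb (by linarith)
    set c₀ : ℝ := min 1 (p/16) with hc₀
    have hc₀pos : 0 < c₀ := lt_min one_pos (by positivity)
    have hc₀le : c₀ ≤ 1 := min_le_left _ _
    obtain ⟨M₀, hM₀⟩ := exists_nat_gt
      (max (max 2 (16/p)) (max (1/δ₀) (Real.exp (2 * Real.log (3/c₀) / ε))))
    obtain ⟨m, hmu, hmM₀⟩ := (hfreq.and_eventually (eventually_ge_atTop M₀)).exists
    have hmgt : (max (max 2 (16/p)) (max (1/δ₀) (Real.exp (2 * Real.log (3/c₀) / ε)))) < m :=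
      lt_of_lt_of_le hM₀ (by exact_mod_cast hmM₀)
    have hm2 : (2:ℝ) ≤ m :=
      le_of_lt (lt_of_le_of_lt (le_trans (le_max_left _ _) (le_max_left _ _)) hmgt)
    have hm16p : 16/p < (m:ℝ) :=
      lt_of_le_of_lt (le_trans (le_max_right _ _) (le_max_left _ _)) hmgt
    have hmδ : 1/δ₀ < (m:ℝ) :=
      lt_of_le_of_lt (le_trans (le_max_left _ _) (le_max_right _ _)) hmgt
    have hmexp : Real.exp (2 * Real.log (3/c₀) / ε) < (m:ℝ) :=
      lt_of_le_of_lt (le_trans (le_max_right _ _) (le_max_right _ _)) hmgt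
    have hm1 : 1 ≤ m := by
      have : (1:ℝ) < m := by linarith
      exact_mod_cast this.le
    have hm0 : (0:ℝ) < m := by linarith
    have hpm16 : 16 < p * m := by
      rw [div_lt_iff₀ hp] at hm16p
      linarith [hm16p]
    set K : ℕ := min m (max 1 (Nat.floor (p * m / 8))) with hKdef
    have hK1 : 1 ≤ K := le_min hm1 (le_max_left _ _)
    have hKm : K ≤ m := min_le_left _ _
    have hfl1 : 1 ≤ Nat.floor (p * m / 8) := Nat.le_floor (by push_cast; linarith)
    have hflle : (Nat.floor (p * m / 8) : ℝ) ≤ p * m / 8 := Nat.floor_le (by positivity)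
    have hflgt : p * m / 8 - 1 < (Nat.floor (p * m / 8) : ℝ) := by
      have := Nat.lt_floor_add_one (p * m / 8)
      linarith
    have hKle : (K:ℝ) ≤ p * m / 8 := by
      have h1 : K ≤ max 1 (Nat.floor (p * m / 8)) := min_le_right _ _
      have h2 : max 1 (Nat.floor (p * m / 8)) = Nat.floor (p * m / 8) := max_eq_right hfl1
      have h3 : K ≤ Nat.floor (p * m / 8) := h2 ▸ h1
      exact le_trans (by exact_mod_cast h3) hflle
    have hpm : (2 * K + 2 : ℝ) / m ≤ p / 2 := by
      rw [div_le_div_iff₀ hm0 two_pos]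
      nlinarith [hKle]
    have hKc₀ : c₀ * m ≤ (K:ℝ) := by
      have hcast : (K:ℝ) = min (m:ℝ) (max 1 (Nat.floor (p * m / 8) : ℝ)) := by
        rw [hKdef]
        push_cast
        rfl
      rw [hcast]
      refine le_min ?_ ?_
      · nlinarith [hc₀le, hm0]
      · refine le_trans ?_ (le_max_right _ _)
        have h1 : c₀ ≤ p/16 := min_le_right _ _
        nlinarith [hflgt, hm0, h1]
    obtain ⟨g, hgP, hgpos, hgb, hcount⟩ := key_construction X hX x₀ hx₀ f M hM m K
      hm1 hK1 hKm p hp hpm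
    have hδ1pos : (0:ℝ) < 1/m := by positivity
    refine ⟨1/(m:ℝ), hδ1pos, ?_, g, hgP, hgpos, ?_, ?_⟩
    · rw [div_lt_iff₀ hm0]
      rw [div_lt_iff₀ hδ₀] at hmδ
      linarith
    · refine lt_of_le_of_lt (Real.iSup_le (fun x => hgb x x.2) (by linarith)) (by linarith)
    · -- main estimate
      set N : ℕ := gridCountGraph (1/(m:ℝ)) (g + f) X with hN
      have hgseq1 : 1 ≤ gseq X m := gseq_pos hX hx₀ hm1
      have hN1 : 1 ≤ N := by
        by_contra hcon
        push_neg at hcon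
        interval_cases N
        · rw [Nat.mul_zero] at hcount
          have : 1 ≤ K * gseq X m := Nat.one_le_iff_ne_zero.2 (by positivity)
          omega
      have hcount' : (K:ℝ) * (gseq X m : ℝ) ≤ 3 * m * (N:ℝ) := by exact_mod_cast hcount
      have hgseqle : (gseq X m : ℝ) ≤ (3/c₀) * N := by
        rw [div_mul_eq_mul_div, le_div_iff₀ hc₀pos]
        nlinarith [hKc₀, hcount', hgseq1, hm0,
          (by exact_mod_cast hgseq1 : (1:ℝ) ≤ (gseq X m : ℝ))]
      have hgseqpos : (0:ℝ) < (gseq X m : ℝ) := by exact_mod_cast hgseq1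
      have hNpos : (0:ℝ) < (N:ℝ) := by exact_mod_cast hN1
      have hlog1 : Real.log (gseq X m) ≤ Real.log (3/c₀) + Real.log N := by
        rw [← Real.log_mul (by positivity) (ne_of_gt hNpos)]
        exact (Real.log_le_log_iff hgseqpos (by positivity)).2 hgseqle
      have hlogm : 0 < Real.log m := Real.log_pos (by linarith)
      have h3c : 0 < 3/c₀ := by positivity
      have hlsmall : Real.log (3/c₀) ≤ (ε/2) * Real.log m := by
        have h1 : 2 * Real.log (3/c₀) / ε < Real.log m := by
          have h2 := hmexp
          rw [← Real.exp_log hm0] at h2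
          exact Real.exp_lt_exp.1 h2
        have h2 : Real.log (3/c₀) = (2 * Real.log (3/c₀) / ε) * (ε/2) := by
          field_simp
        rw [h2]
        nlinarith [h1, hlogm, hε]
      have humu : (L - ε/2) * Real.log m < Real.log (gseq X m) := by
        rw [hu] at hmu
        exact (lt_div_iff₀ hlogm).1 hmu
      have hfinal : (L - ε) * Real.log m ≤ Real.log N := by nlinarith [hlog1, hlsmall, humu]
      rw [ge_iff_le, one_div, Real.log_inv, neg_neg, le_div_iff₀ hlogm]
      exact hfinal
end
end

section
/- Let p > 1 and A = {1/n^p : n ∈ ℕ, n ≥ 1}. Then the upper graph box dimension of A equals 1. -/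
open Set Filter

noncomputable section

namespace UGBDaux

def Ap (p : ℝ) : Set ℝ := {x : ℝ | ∃ n : ℕ, 1 ≤ n ∧ x = 1 / (n : ℝ) ^ p}

def hitSet (δ : ℝ) (E : Set (ℝ × ℝ)) : Set (ℤ × ℤ) :=
  {q : ℤ × ℤ |
    ((Set.Icc ((q.1 : ℝ) * δ) ((q.1 + 1) * δ) ×ˢ
      Set.Icc ((q.2 : ℝ) * δ) ((q.2 + 1) * δ)) ∩ E).Nonempty}

lemma boxCount2_eq (δ : ℝ) (E : Set (ℝ × ℝ)) : boxCount2 δ E = (hitSet δ E).ncard := rfl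

def coverFam (p : ℝ) (f : ℝ → ℝ) (δ : ℝ) (n : ℕ) : Finset (ℤ × ℤ) :=
  (Finset.Icc (⌊(1 / (n : ℝ) ^ p) / δ⌋ - 1) ⌊(1 / (n : ℝ) ^ p) / δ⌋) ×ˢ
  (Finset.Icc (⌊f (1 / (n : ℝ) ^ p) / δ⌋ - 1) ⌊f (1 / (n : ℝ) ^ p) / δ⌋)

/-- covering Finset for the hit set of the graph of a bounded function over `Ap p`. -/
def cover (p : ℝ) (f : ℝ → ℝ) (δ M : ℝ) : Finset (ℤ × ℤ) :=
  (({0} : Finset ℤ) ×ˢ Finset.Icc (-(⌊M / δ⌋ + 2)) ⌊M / δ⌋) ∪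
  (Finset.Icc 1 ⌈δ⁻¹⌉₊).biUnion (coverFam p f δ)

lemma hitSet_subset_cover {p : ℝ} (hp : 1 < p) (f : ℝ → ℝ) (M : ℝ)
    (hM : ∀ x ∈ Ap p, |f x| ≤ M) {δ : ℝ} (hδ0 : 0 < δ) :
    hitSet δ (graphOver f (Ap p)) ⊆ ↑(cover p f δ M) := by
  rintro ⟨i, j⟩ ⟨⟨x, y⟩, ⟨hbox, hxA, hyf⟩⟩
  obtain ⟨hx1, hx2⟩ := hbox.1
  obtain ⟨hy1, hy2⟩ := hbox.2
  obtain ⟨n, hn1, hxn⟩ := hxA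
  dsimp only at hx1 hx2 hy1 hy2 hxn hyf
  have hn0 : (0 : ℝ) < n := by exact_mod_cast hn1
  have hpow : 0 < (n : ℝ) ^ p := Real.rpow_pos_of_pos hn0 p
  have hxpos : 0 < x := by rw [hxn]; positivity
  have hfx : |f x| ≤ M := hM x ⟨n, hn1, hxn⟩
  have hi0 : 0 ≤ i := by
    by_contra hneg
    push_neg at hneg
    have h0 : i ≤ -1 := by omega
    have h1 : (i : ℝ) ≤ -1 := by exact_mod_cast h0
    nlinarith
  simp only [cover, Finset.coe_union, Set.mem_union]
  rcases eq_or_lt_of_le hi0 with hi | hi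
  · -- i = 0 column
    left
    rw [Finset.mem_coe, Finset.mem_product]
    constructor
    · simp [← hi]
    · rw [Finset.mem_Icc]
      constructor
      · have h1 : -M ≤ y := by rw [hyf]; exact neg_le_of_abs_le hfx
        have h4 : (M / δ) ≤ (⌊M / δ⌋ : ℝ) + 1 := (Int.lt_floor_add_one _).le
        have h2 : -M / δ ≤ (j : ℝ) + 1 := (div_le_iff₀ hδ0).mpr (by linarith)
        have h5 : ((-(⌊M / δ⌋ + 2) : ℤ) : ℝ) ≤ (j : ℝ) := by
          push_cast
          rw [neg_div] at h2
          linarith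
        exact_mod_cast h5
      · have h1 : y ≤ M := by rw [hyf]; exact (le_abs_self _).trans hfx
        have h2 : (j : ℝ) ≤ M / δ := by rw [le_div_iff₀ hδ0]; linarith
        exact Int.le_floor.mpr h2
  · -- i ≥ 1
    right
    have hi1 : (1 : ℝ) ≤ i := by exact_mod_cast hi
    have hδx : δ ≤ x := by nlinarith
    have hnp : (n : ℝ) ^ p ≤ δ⁻¹ := by
      rw [← one_div, le_div_iff₀ hδ0]
      rw [hxn, le_div_iff₀ hpow] at hδx
      linarith
    have hnle : (n : ℝ) ≤ δ⁻¹ :=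
      calc (n : ℝ) = (n : ℝ) ^ (1 : ℝ) := (Real.rpow_one _).symm
        _ ≤ (n : ℝ) ^ p := Real.rpow_le_rpow_of_exponent_le (by exact_mod_cast hn1) hp.le
        _ ≤ δ⁻¹ := hnp
    have hnceil : n ≤ ⌈δ⁻¹⌉₊ := by
      have h := hnle.trans (Nat.le_ceil δ⁻¹)
      exact_mod_cast h
    rw [Finset.mem_coe, Finset.mem_biUnion]
    refine ⟨n, Finset.mem_Icc.mpr ⟨hn1, hnceil⟩, ?_⟩
    rw [coverFam, Finset.mem_product, ← hxn]
    constructor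
    · rw [Finset.mem_Icc]
      refine ⟨?_, Int.le_floor.mpr ((le_div_iff₀ hδ0).mpr hx1)⟩
      have h2 : (⌊x / δ⌋ : ℝ) ≤ (i : ℝ) + 1 := le_trans (Int.floor_le _) ((div_le_iff₀ hδ0).mpr hx2)
      have h3 : ⌊x / δ⌋ ≤ i + 1 := by exact_mod_cast h2
      omega
    · rw [Finset.mem_Icc, ← hyf]
      refine ⟨?_, Int.le_floor.mpr ((le_div_iff₀ hδ0).mpr hy1)⟩
      have h2 : (⌊y / δ⌋ : ℝ) ≤ (j : ℝ) + 1 := le_trans (Int.floor_le _) ((div_le_iff₀ hδ0).mpr hy2)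
      have h3 : ⌊y / δ⌋ ≤ j + 1 := by exact_mod_cast h2
      omega

lemma cover_card_le (p : ℝ) (f : ℝ → ℝ) {δ M : ℝ} (hδ0 : 0 < δ) (hδ1 : δ ≤ 1)
    (hM0 : 0 ≤ M) : ((cover p f δ M).card : ℝ) ≤ (2 * M + 16) / δ := by
  have hinv1 : (1 : ℝ) ≤ δ⁻¹ := (one_le_inv_iff₀).mpr ⟨hδ0, hδ1⟩
  have hb0 : (0 : ℤ) ≤ ⌊M / δ⌋ := Int.floor_nonneg.mpr (by positivity)
  have hcard1 : ((({0} : Finset ℤ) ×ˢ Finset.Icc (-(⌊M / δ⌋ + 2)) ⌊M / δ⌋).card : ℝ)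
      ≤ 2 * (M / δ) + 3 := by
    rw [Finset.card_product, Finset.card_singleton, one_mul, Int.card_Icc]
    have h1 : (⌊M / δ⌋ + 1 - -(⌊M / δ⌋ + 2)) = 2 * ⌊M / δ⌋ + 3 := by ring
    rw [h1]
    have h2' : ((2 * ⌊M / δ⌋ + 3).toNat : ℤ) = 2 * ⌊M / δ⌋ + 3 := Int.toNat_of_nonneg (by omega)
    have h2 : ((2 * ⌊M / δ⌋ + 3).toNat : ℝ) = ((2 * ⌊M / δ⌋ + 3 : ℤ) : ℝ) := by
      exact_mod_cast h2'
    rw [h2]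
    push_cast
    have := Int.floor_le (M / δ)
    linarith
  have hcard2 : (((Finset.Icc 1 ⌈δ⁻¹⌉₊).biUnion (coverFam p f δ)).card : ℝ)
      ≤ 4 * δ⁻¹ + 4 := by
    have h1 : ((Finset.Icc 1 ⌈δ⁻¹⌉₊).biUnion (coverFam p f δ)).card ≤
        ∑ n ∈ Finset.Icc 1 ⌈δ⁻¹⌉₊, (coverFam p f δ n).card :=
      Finset.card_biUnion_le
    have h2 : ∀ n : ℕ, (coverFam p f δ n).card = 4 := by
      intro n
      rw [coverFam, Finset.card_product, Int.card_Icc, Int.card_Icc]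
      norm_num
      decide
    have h3 : ((Finset.Icc 1 ⌈δ⁻¹⌉₊).biUnion (coverFam p f δ)).card ≤ ⌈δ⁻¹⌉₊ * 4 := by
      refine h1.trans ?_
      rw [Finset.sum_congr rfl (fun n _ => h2 n), Finset.sum_const, Nat.card_Icc]
      simp only [smul_eq_mul]
      omega
    calc (((Finset.Icc 1 ⌈δ⁻¹⌉₊).biUnion (coverFam p f δ)).card : ℝ) ≤ ((⌈δ⁻¹⌉₊ * 4 : ℕ) : ℝ) := by
          exact_mod_cast h3
      _ ≤ 4 * δ⁻¹ + 4 := by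
          push_cast
          have := (Nat.ceil_lt_add_one (le_of_lt (by positivity : (0:ℝ) < δ⁻¹))).le
          nlinarith
  calc ((cover p f δ M).card : ℝ)
      ≤ ((({0} : Finset ℤ) ×ˢ Finset.Icc (-(⌊M / δ⌋ + 2)) ⌊M / δ⌋).card : ℝ) +
        (((Finset.Icc 1 ⌈δ⁻¹⌉₊).biUnion (coverFam p f δ)).card : ℝ) := by
        rw [cover]
        exact_mod_cast Finset.card_union_le _ _
    _ ≤ (2 * (M / δ) + 3) + (4 * δ⁻¹ + 4) := add_le_add hcard1 hcard2
    _ ≤ (2 * M + 16) / δ := by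
        rw [div_eq_mul_inv, div_eq_mul_inv]
        linarith [mul_nonneg hM0 (le_of_lt (inv_pos.mpr hδ0))]

lemma hitSet_finite {p : ℝ} (hp : 1 < p) (f : ℝ → ℝ) (M : ℝ)
    (hM : ∀ x ∈ Ap p, |f x| ≤ M) {δ : ℝ} (hδ0 : 0 < δ) :
    (hitSet δ (graphOver f (Ap p))).Finite :=
  Set.Finite.subset (cover p f δ M).finite_toSet (hitSet_subset_cover hp f M hM hδ0)

lemma boxCount2_le {p : ℝ} (hp : 1 < p) (f : ℝ → ℝ) (M : ℝ)
    (hM : ∀ x ∈ Ap p, |f x| ≤ M) (hM0 : 0 ≤ M) {δ : ℝ} (hδ0 : 0 < δ) (hδ1 : δ ≤ 1) :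
    ((boxCount2 δ (graphOver f (Ap p)) : ℝ)) ≤ (2 * M + 16) / δ := by
  rw [boxCount2_eq]
  have h1 : (hitSet δ (graphOver f (Ap p))).ncard ≤ ((cover p f δ M : Finset (ℤ × ℤ)) : Set (ℤ × ℤ)).ncard :=
    Set.ncard_le_ncard (hitSet_subset_cover hp f M hM hδ0) (cover p f δ M).finite_toSet
  rw [Set.ncard_coe_finset] at h1
  calc ((hitSet δ (graphOver f (Ap p))).ncard : ℝ) ≤ ((cover p f δ M).card : ℝ) := by exact_mod_cast h1
    _ ≤ (2 * M + 16) / δ := cover_card_le p f hδ0 hδ1 hM0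

/-- The quantity in the limsup defining the upper box dimension. -/
def dimRatio (E : Set (ℝ × ℝ)) (δ : ℝ) : ℝ := Real.log (boxCount2 δ E) / (-Real.log δ)

lemma upperBoxDim2_eq_limsup (E : Set (ℝ × ℝ)) :
    upperBoxDim2 E = Filter.limsup (dimRatio E) (nhdsWithin 0 (Set.Ioi 0)) := rfl

lemma dimRatio_nonneg (E : Set (ℝ × ℝ)) {δ : ℝ} (hδ0 : 0 < δ) (hδ1 : δ < 1) :
    0 ≤ dimRatio E δ := by
  apply div_nonneg
  · rcases Nat.eq_zero_or_pos (boxCount2 δ E) with h | h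
    · simp [h]
    · apply Real.log_nonneg
      exact_mod_cast h
  · have := Real.log_neg hδ0 hδ1
    linarith

lemma dimRatio_cobounded (E : Set (ℝ × ℝ)) :
    Filter.IsCoboundedUnder (· ≤ ·) (nhdsWithin (0:ℝ) (Set.Ioi 0)) (dimRatio E) := by
  apply Filter.IsCoboundedUnder.of_frequently_ge (a := 0)
  apply Filter.Eventually.frequently
  filter_upwards [Ioo_mem_nhdsGT (zero_lt_one)] with δ hδ
  exact dimRatio_nonneg E hδ.1 hδ.2

lemma eventually_dimRatio_le {p : ℝ} (hp : 1 < p) (f : ℝ → ℝ) (M : ℝ)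
    (hM : ∀ x ∈ Ap p, |f x| ≤ M) (hM0 : 0 ≤ M) {ε : ℝ} (hε : 0 < ε) :
    ∀ᶠ δ in nhdsWithin (0:ℝ) (Set.Ioi 0),
      dimRatio (graphOver f (Ap p)) δ ≤ 1 + ε := by
  set C : ℝ := 2 * M + 16 with hC
  have hC1 : 1 < C := by simp [hC]; linarith
  have hlogC : 0 < Real.log C := Real.log_pos hC1
  set η : ℝ := min 1 (Real.exp (-(Real.log C / ε))) with hη
  have hη0 : 0 < η := lt_min one_pos (Real.exp_pos _)
  filter_upwards [Ioo_mem_nhdsGT hη0] with δ hδ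
  obtain ⟨hδ0, hδη⟩ := hδ
  have hδ1 : δ < 1 := lt_of_lt_of_le hδη (min_le_left _ _)
  have hlogδ : 0 < -Real.log δ := by have := Real.log_neg hδ0 hδ1; linarith
  have hcount : ((boxCount2 δ (graphOver f (Ap p)) : ℝ)) ≤ C / δ :=
    boxCount2_le hp f M hM hM0 hδ0 hδ1.le
  have hCδ1 : 1 ≤ C / δ := by
    rw [le_div_iff₀ hδ0]; nlinarith
  have hlogcount : Real.log (boxCount2 δ (graphOver f (Ap p))) ≤ Real.log (C / δ) := by
    rcases Nat.eq_zero_or_pos (boxCount2 δ (graphOver f (Ap p))) with h | h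
    · simp [h]
      exact Real.log_nonneg hCδ1
    · apply Real.log_le_log (by exact_mod_cast h) hcount
  have hlogdiv : Real.log (C / δ) = Real.log C - Real.log δ :=
    Real.log_div (by linarith) (ne_of_gt hδ0)
  have hδexp : Real.log δ ≤ -(Real.log C / ε) := by
    have h1 : δ ≤ Real.exp (-(Real.log C / ε)) := le_of_lt (lt_of_lt_of_le hδη (min_le_right _ _))
    calc Real.log δ ≤ Real.log (Real.exp (-(Real.log C / ε))) := Real.log_le_log hδ0 h1
      _ = -(Real.log C / ε) := Real.log_exp _
  have hratio : Real.log C / (-Real.log δ) ≤ ε := by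
    rw [div_le_iff₀ hlogδ]
    have h2 : Real.log C / ε ≤ -Real.log δ := by linarith
    calc Real.log C = ε * (Real.log C / ε) := by field_simp
      _ ≤ ε * (-Real.log δ) := by
          apply mul_le_mul_of_nonneg_left h2 hε.le
  have hlogδne : Real.log δ ≠ 0 := by intro h; rw [h] at hlogδ; simp at hlogδ
  calc dimRatio (graphOver f (Ap p)) δ ≤ Real.log (C / δ) / (-Real.log δ) := by
        unfold dimRatio
        exact div_le_div_of_nonneg_right hlogcount hlogδ.le
    _ = Real.log C / (-Real.log δ) + 1 := by
        rw [hlogdiv, sub_div]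
        have h9 : Real.log δ / (-Real.log δ) = -1 := by
          rw [div_neg, div_self hlogδne]
        rw [h9]
        ring
    _ ≤ ε + 1 := by linarith
    _ = 1 + ε := by ring

lemma dim2_le_one {p : ℝ} (hp : 1 < p) (f : ℝ → ℝ) (M : ℝ)
    (hM : ∀ x ∈ Ap p, |f x| ≤ M) (hM0 : 0 ≤ M) :
    upperBoxDim2 (graphOver f (Ap p)) ≤ 1 := by
  rw [upperBoxDim2_eq_limsup]
  apply le_of_forall_pos_le_add
  intro ε hε
  exact Filter.limsup_le_of_le (dimRatio_cobounded _)
    (eventually_dimRatio_le hp f M hM hM0 hε)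

lemma isBoundedUnder_dimRatio {p : ℝ} (hp : 1 < p) (f : ℝ → ℝ) (M : ℝ)
    (hM : ∀ x ∈ Ap p, |f x| ≤ M) (hM0 : 0 ≤ M) :
    Filter.IsBoundedUnder (· ≤ ·) (nhdsWithin (0:ℝ) (Set.Ioi 0))
      (dimRatio (graphOver f (Ap p))) :=
  ⟨2, by
    rw [Filter.eventually_map]
    filter_upwards [eventually_dimRatio_le hp f M hM hM0 one_pos] with δ h
    linarith⟩

/-! ### The lower-bound construction -/

def ak (p : ℝ) (k : ℕ) : ℝ := (2 * p) ^ k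
def dl (p : ℝ) (k : ℕ) : ℝ := (2 : ℝ) ^ (-(ak p k))
def Nk (p : ℝ) (k : ℕ) : ℕ := ⌈(2 : ℝ) ^ (ak p k / p)⌉₊
def Kk (p : ℝ) (k : ℕ) : ℕ := ⌊(2 : ℝ) ^ (ak p k - k)⌋₊
def tent (p : ℝ) (k : ℕ) (u : ℝ) : ℝ :=
  dl p k * max 0 (min (u - (Nk p k : ℝ)) ((Nk p k : ℝ) + 2 * (Kk p k : ℝ) - u))
def hfun (p : ℝ) (u : ℝ) : ℝ := ∑' k : ℕ, tent p (k + 1) u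
def flow (p : ℝ) (x : ℝ) : ℝ := hfun p (x ^ (-p⁻¹))

section lower
variable {p : ℝ} (hp : 1 < p)

include hp in
lemma ak_pos (k : ℕ) : 0 < ak p k := by
  have : (0:ℝ) < 2 * p := by linarith
  exact pow_pos this k

include hp in
lemma ak_ge_one (k : ℕ) : 1 ≤ ak p k := one_le_pow₀ (by linarith)

include hp in
lemma ak_ge_two_pow (k : ℕ) : (2:ℝ)^(k:ℕ) ≤ ak p k :=
  pow_le_pow_left₀ (by norm_num) (by linarith) k

include hp in
lemma ak_gt_two {k : ℕ} (hk : 1 ≤ k) : 2 < ak p k := by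
  have h1 : (2:ℝ) < 2 * p := by linarith
  calc (2:ℝ) < 2 * p := h1
    _ = (2*p)^1 := (pow_one _).symm
    _ ≤ (2*p)^k := pow_le_pow_right₀ (by linarith) hk

lemma ak_succ (k : ℕ) : ak p (k+1) = (2*p) * ak p k := by
  rw [ak, ak, pow_succ]; ring

lemma dl_pos (k : ℕ) : 0 < dl p k := Real.rpow_pos_of_pos two_pos _

include hp in
lemma dl_le_one (k : ℕ) : dl p k ≤ 1 :=
  Real.rpow_le_one_of_one_le_of_nonpos one_le_two (by linarith [ak_pos hp (p := p) (k := k)])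

include hp in
lemma dl_lt_one (k : ℕ) : dl p k < 1 := by
  rw [dl]
  apply Real.rpow_lt_one_of_one_lt_of_neg one_lt_two
  linarith [ak_pos hp (p := p) (k := k)]

lemma Nk_pos (k : ℕ) : 1 ≤ Nk p k := by
  rw [Nk, Nat.one_le_ceil_iff]
  positivity

lemma Nk_ge (k : ℕ) : (2:ℝ) ^ (ak p k / p) ≤ (Nk p k : ℝ) := Nat.le_ceil _

lemma Nk_lt (k : ℕ) : (Nk p k : ℝ) < (2:ℝ) ^ (ak p k / p) + 1 :=
  Nat.ceil_lt_add_one (by positivity)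

lemma Kk_le (k : ℕ) : (Kk p k : ℝ) ≤ (2:ℝ) ^ (ak p k - k) := Nat.floor_le (by positivity)

lemma Kk_gt (k : ℕ) : (2:ℝ) ^ (ak p k - k) < (Kk p k : ℝ) + 1 :=
  Nat.lt_floor_add_one _

include hp in
lemma Nk_gap {k : ℕ} (hk : 1 ≤ k) : Nk p k + 2 * Kk p k < Nk p (k + 1) := by
  have hp0 : (0:ℝ) < p := by linarith
  have hak2 : 2 < ak p k := ak_gt_two hp hk
  have hak0 : 0 < ak p k := ak_pos hp k
  have h1 : (2:ℝ) ^ (ak p k / p) ≤ (2:ℝ) ^ (ak p k) := by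
    apply Real.rpow_le_rpow_of_exponent_le one_le_two
    rw [div_le_iff₀ hp0]
    nlinarith
  have h2 : (1:ℝ) ≤ (2:ℝ) ^ (ak p k) := Real.one_le_rpow one_le_two hak0.le
  have h3 : (2:ℝ) ^ (ak p k - k) ≤ (2:ℝ) ^ (ak p k) := by
    apply Real.rpow_le_rpow_of_exponent_le one_le_two
    exact sub_le_self _ (Nat.cast_nonneg k)
  have hsum : (Nk p k : ℝ) + 2 * (Kk p k : ℝ) < (2:ℝ) ^ (ak p k + 2) := by
    have h4 : (2:ℝ) ^ (2:ℝ) = 4 := by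
      have hc : ((2:ℕ):ℝ) = (2:ℝ) := by norm_num
      rw [← hc, Real.rpow_natCast]
      norm_num
    have e1 : (2:ℝ) ^ (ak p k + 2) = (2:ℝ) ^ (ak p k) * 4 := by
      rw [Real.rpow_add two_pos, h4]
    have := Nk_lt (p := p) (k := k)
    have := Kk_le (p := p) (k := k)
    rw [e1]
    nlinarith
  have hexp : (2:ℝ) ^ (ak p k + 2) < (2:ℝ) ^ (2 * ak p k) := by
    apply Real.rpow_lt_rpow_of_exponent_lt one_lt_two
    linarith
  have hNk1 : (2:ℝ) ^ (2 * ak p k) ≤ (Nk p (k+1) : ℝ) := by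
    have e2 : ak p (k+1) / p = 2 * ak p k := by
      rw [ak_succ]
      field_simp
    have := Nk_ge (p := p) (k := k + 1)
    rw [e2] at this
    exact this
  have : ((Nk p k + 2 * Kk p k : ℕ) : ℝ) < ((Nk p (k+1) : ℕ) : ℝ) := by
    push_cast
    linarith
  exact_mod_cast this

include hp in
lemma Nk_mono {m k : ℕ} (hm : 1 ≤ m) (hmk : m ≤ k) : Nk p m ≤ Nk p k := by
  induction k with
  | zero => omega
  | succ n ih =>
    rcases Nat.lt_or_ge m (n+1) with h | h
    · have h1 := ih (by omega)
      have h2 := Nk_gap hp (k := n) (by omega)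
      omega
    · have hmeq : m = n + 1 := by omega
      rw [hmeq]

include hp in
lemma Nk_gap' {m k : ℕ} (hm : 1 ≤ m) (hmk : m < k) : Nk p m + 2 * Kk p m < Nk p k := by
  have h1 := Nk_gap hp hm
  rcases Nat.lt_or_ge (m+1) k with h | h
  · exact lt_of_lt_of_le h1 (Nk_mono hp (by omega) (by omega))
  · have hkeq : k = m + 1 := by omega
    subst hkeq
    exact h1

lemma tent_nonneg (k : ℕ) (u : ℝ) : 0 ≤ tent p k u :=
  mul_nonneg (dl_pos k).le (le_max_left _ _)

lemma tent_le (k : ℕ) (u : ℝ) : tent p k u ≤ (2:ℝ) ^ (-(k:ℝ)) := by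
  have h1 : max 0 (min (u - (Nk p k : ℝ)) ((Nk p k : ℝ) + 2 * (Kk p k : ℝ) - u))
      ≤ (Kk p k : ℝ) := by
    apply max_le (Nat.cast_nonneg _)
    rcases le_total (u - (Nk p k : ℝ)) ((Nk p k : ℝ) + 2 * (Kk p k : ℝ) - u) with h | h
    · rw [min_eq_left h]; linarith
    · rw [min_eq_right h]; linarith
  calc tent p k u ≤ dl p k * (Kk p k : ℝ) :=
        mul_le_mul_of_nonneg_left h1 (dl_pos k).le
    _ ≤ (2:ℝ)^(-(ak p k)) * (2:ℝ)^(ak p k - k) :=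
        mul_le_mul_of_nonneg_left (Kk_le k) (dl_pos k).le
    _ = (2:ℝ) ^ (-(k:ℝ)) := by
        rw [← Real.rpow_add two_pos]
        ring_nf

lemma tent_continuous (k : ℕ) : Continuous (tent p k) := by
  apply continuous_const.mul
  exact continuous_const.max ((continuous_id.sub continuous_const).min
    (continuous_const.sub continuous_id))

lemma tent_eq_zero_left {k : ℕ} {u : ℝ} (h : u < (Nk p k : ℝ)) : tent p k u = 0 := by
  rw [tent, max_eq_left, mul_zero]
  exact (min_le_left _ _).trans (by linarith)

lemma tent_eq_zero_right {k : ℕ} {u : ℝ} (h : (Nk p k : ℝ) + 2 * (Kk p k : ℝ) < u) :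
    tent p k u = 0 := by
  rw [tent, max_eq_left, mul_zero]
  exact (min_le_right _ _).trans (by linarith)

lemma tent_ne_zero_mem {k : ℕ} {u : ℝ} (h : tent p k u ≠ 0) :
    (Nk p k : ℝ) ≤ u ∧ u ≤ (Nk p k : ℝ) + 2 * (Kk p k : ℝ) := by
  constructor
  · by_contra hc; push_neg at hc; exact h (tent_eq_zero_left hc)
  · by_contra hc; push_neg at hc; exact h (tent_eq_zero_right hc)

include hp in
lemma tent_disjoint {k m : ℕ} (hk : 1 ≤ k) (hm : 1 ≤ m) (hne : m ≠ k) {u : ℝ}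
    (h1 : (Nk p k : ℝ) ≤ u) (h2 : u ≤ (Nk p k : ℝ) + 2 * (Kk p k : ℝ)) :
    tent p m u = 0 := by
  rcases Nat.lt_or_ge m k with h | h
  · apply tent_eq_zero_right
    have := Nk_gap' hp hm h
    have hcast : ((Nk p m + 2 * Kk p m : ℕ) : ℝ) < ((Nk p k : ℕ) : ℝ) := by exact_mod_cast this
    push_cast at hcast
    linarith
  · have hlt : k < m := by omega
    apply tent_eq_zero_left
    have := Nk_gap' hp hk hlt
    have hcast : ((Nk p k + 2 * Kk p k : ℕ) : ℝ) < ((Nk p m : ℕ) : ℝ) := by exact_mod_cast this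
    push_cast at hcast
    linarith
end lower

section hfunprops
variable {p : ℝ} (hp : 1 < p)

lemma two_rpow_neg_nat (k : ℕ) : (2:ℝ) ^ (-(k:ℝ)) = (2⁻¹ : ℝ) ^ k := by
  rw [Real.rpow_neg (by norm_num : (0:ℝ) ≤ 2), Real.rpow_natCast, inv_pow]

lemma summable_half_bound : Summable (fun k : ℕ => (2⁻¹ : ℝ) ^ (k + 1)) := by
  have h : Summable (fun k : ℕ => (2⁻¹ : ℝ) ^ k) :=
    summable_geometric_of_lt_one (by norm_num) (by norm_num)
  simpa [pow_succ'] using h.mul_left (2⁻¹ : ℝ)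

lemma tent_le' (k : ℕ) (u : ℝ) : tent p (k + 1) u ≤ (2⁻¹ : ℝ) ^ (k + 1) := by
  have := tent_le (p := p) (k := k + 1) u
  rwa [two_rpow_neg_nat (k + 1)] at this

lemma summable_tent (u : ℝ) : Summable (fun k : ℕ => tent p (k + 1) u) :=
  Summable.of_nonneg_of_le (fun k => tent_nonneg _ _) (fun k => tent_le' k u)
    summable_half_bound

lemma hfun_continuous : Continuous (hfun p) := by
  apply continuous_tsum (fun k => tent_continuous (k + 1)) summable_half_bound
  intro k u
  rw [Real.norm_eq_abs, abs_of_nonneg (tent_nonneg _ _)]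
  exact tent_le' k u

lemma hfun_nonneg (u : ℝ) : 0 ≤ hfun p u :=
  tsum_nonneg (fun k => tent_nonneg _ _)

lemma hfun_le_one (u : ℝ) : hfun p u ≤ 1 := by
  have h1 : hfun p u ≤ ∑' k : ℕ, (2⁻¹ : ℝ) ^ (k + 1) :=
    Summable.tsum_le_tsum (fun k => tent_le' k u) (summable_tent u) summable_half_bound
  have h2 : ∑' k : ℕ, (2⁻¹ : ℝ) ^ (k + 1) = 1 := by
    have h3 : ∑' k : ℕ, (2⁻¹ : ℝ) ^ (k + 1) = (2⁻¹ : ℝ) * ∑' k : ℕ, (2⁻¹ : ℝ) ^ k := by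
      rw [← tsum_mul_left]
      congr 1
      funext k
      rw [pow_succ']
    rw [h3, tsum_geometric_of_lt_one (by norm_num) (by norm_num)]
    norm_num
  linarith

include hp in
lemma hfun_eval {k : ℕ} (hk : 1 ≤ k) {j : ℕ} (hj : j ≤ Kk p k) :
    hfun p ((Nk p k : ℝ) + (j : ℝ)) = dl p k * (j : ℝ) := by
  have hjK : (j:ℝ) ≤ (Kk p k : ℝ) := by exact_mod_cast hj
  have hj0 : (0:ℝ) ≤ (j:ℝ) := Nat.cast_nonneg j
  have hK0 : (0:ℝ) ≤ (Kk p k : ℝ) := Nat.cast_nonneg _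
  have hu1 : (Nk p k : ℝ) ≤ (Nk p k : ℝ) + (j : ℝ) := by linarith
  have hu2 : (Nk p k : ℝ) + (j : ℝ) ≤ (Nk p k : ℝ) + 2 * (Kk p k : ℝ) := by linarith
  have hsingle : hfun p ((Nk p k : ℝ) + (j : ℝ)) = tent p k ((Nk p k : ℝ) + (j : ℝ)) := by
    rw [hfun]
    have hk1 : k - 1 + 1 = k := by omega
    rw [tsum_eq_single (k - 1) ?_]
    · rw [hk1]
    · intro b hb
      exact tent_disjoint hp hk (by omega) (by omega) hu1 hu2
  rw [hsingle, tent]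
  have e1 : ((Nk p k : ℝ) + (j : ℝ)) - (Nk p k : ℝ) = (j:ℝ) := by ring
  have e2 : (Nk p k : ℝ) + 2 * (Kk p k : ℝ) - ((Nk p k : ℝ) + (j : ℝ))
      = 2*(Kk p k : ℝ) - (j:ℝ) := by ring
  rw [e1, e2, min_eq_left (by linarith), max_eq_right hj0]

end hfunprops

section flowprops
variable {p : ℝ} (hp : 1 < p)

include hp in
lemma hfun_tail {m : ℕ} (hm : 1 ≤ m) {u : ℝ} (hu : (Nk p m : ℝ) ≤ u) :
    hfun p u ≤ (2⁻¹ : ℝ) ^ m := by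
  by_cases hall : ∀ i : ℕ, tent p (i + 1) u = 0
  · have : hfun p u = 0 := by
      rw [hfun]
      have : (fun i : ℕ => tent p (i + 1) u) = fun _ => 0 := funext hall
      rw [this, tsum_zero]
    rw [this]
    positivity
  · push_neg at hall
    obtain ⟨i, hi⟩ := hall
    obtain ⟨hiu1, hiu2⟩ := tent_ne_zero_mem hi
    have him : m ≤ i + 1 := by
      by_contra hc
      push_neg at hc
      have hlt : i + 1 < m := hc
      have := Nk_gap' hp (by omega : 1 ≤ i + 1) hlt
      have hcast : ((Nk p (i+1) + 2 * Kk p (i+1) : ℕ) : ℝ) < ((Nk p m : ℕ) : ℝ) := by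
        exact_mod_cast this
      push_cast at hcast
      linarith
    have hsingle : hfun p u = tent p (i + 1) u := by
      rw [hfun]
      apply tsum_eq_single i
      intro b hb
      exact tent_disjoint hp (by omega : 1 ≤ i + 1) (by omega) (by omega) hiu1 hiu2
    rw [hsingle]
    calc tent p (i + 1) u ≤ (2⁻¹ : ℝ) ^ (i + 1) := tent_le' i u
      _ ≤ (2⁻¹ : ℝ) ^ m := pow_le_pow_of_le_one (by norm_num) (by norm_num) him

lemma hfun_zero : hfun p 0 = 0 := by
  rw [hfun]
  have h : (fun i : ℕ => tent p (i + 1) (0:ℝ)) = fun _ => 0 := by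
    funext i
    apply tent_eq_zero_left
    have h1 : 1 ≤ Nk p (i + 1) := Nk_pos _
    have : (1:ℝ) ≤ (Nk p (i+1) : ℝ) := by exact_mod_cast h1
    linarith
  rw [h, tsum_zero]

include hp in
lemma rpow_inv_eval {n : ℕ} (hn : 1 ≤ n) : (1 / (n : ℝ) ^ p) ^ (-p⁻¹) = (n : ℝ) := by
  have hn0 : (0:ℝ) < n := by exact_mod_cast hn
  have hp0 : p ≠ 0 := by intro h; rw [h] at hp; norm_num at hp
  rw [one_div, ← Real.rpow_neg hn0.le]
  rw [← Real.rpow_mul hn0.le]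
  rw [show -p * -p⁻¹ = 1 by field_simp, Real.rpow_one]

include hp in
lemma flow_eval {n : ℕ} (hn : 1 ≤ n) : flow p (1 / (n : ℝ) ^ p) = hfun p (n : ℝ) := by
  rw [flow, rpow_inv_eval hp hn]

lemma flow_abs_le_one (x : ℝ) : |flow p x| ≤ 1 := by
  rw [flow, abs_of_nonneg (hfun_nonneg _)]
  exact hfun_le_one _

include hp in
lemma Ap_subset_Icc : Ap p ⊆ Set.Icc (0:ℝ) 1 := by
  rintro x ⟨n, hn1, rfl⟩
  have hn0 : (0:ℝ) < n := by exact_mod_cast hn1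
  have hpow : 0 < (n : ℝ) ^ p := Real.rpow_pos_of_pos hn0 _
  constructor
  · positivity
  · rw [div_le_one hpow]
    calc (1:ℝ) = (n:ℝ) ^ (0:ℝ) := (Real.rpow_zero _).symm
      _ ≤ (n:ℝ) ^ p := Real.rpow_le_rpow_of_exponent_le (by exact_mod_cast hn1) (by linarith)

include hp in
lemma flow_continuousOn : ContinuousOn (flow p) (Set.Icc (0:ℝ) 1) := by
  intro x hx
  rcases eq_or_lt_of_le hx.1 with hx0 | hx0
  · -- x = 0
    rw [← hx0]
    have hflow0 : flow p 0 = 0 := by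
      rw [flow, Real.zero_rpow (by
        intro h
        have : p⁻¹ = 0 := by linarith [neg_eq_zero.mp h]
        have : p = 0 := by simpa using congrArg (·⁻¹) this
        linarith)]
      exact hfun_zero
    rw [ContinuousWithinAt, hflow0]
    rw [NormedAddCommGroup.tendsto_nhds_zero]
    intro ε hε
    obtain ⟨m, hm⟩ := exists_pow_lt_of_lt_one hε (by norm_num : (2⁻¹:ℝ) < 1)
    set m' := m + 1 with hm'
    have hm'1 : 1 ≤ m' := by omega
    have hmlt : (2⁻¹:ℝ) ^ m' < ε :=
      lt_of_le_of_lt (pow_le_pow_of_le_one (by norm_num) (by norm_num) (by omega)) hm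
    set x₀ : ℝ := ((Nk p m' : ℝ)) ^ (-p) with hx₀
    have hN0 : (0:ℝ) < (Nk p m' : ℝ) := by
      have := Nk_pos (p := p) (k := m')
      exact_mod_cast this
    have hx₀0 : 0 < x₀ := Real.rpow_pos_of_pos hN0 _
    rw [eventually_nhdsWithin_iff]
    have hball : Metric.ball (0:ℝ) x₀ ∈ nhds (0:ℝ) := Metric.ball_mem_nhds _ hx₀0
    filter_upwards [hball] with z hz hzIcc
    rcases eq_or_lt_of_le hzIcc.1 with hz0 | hz0
    · rw [← hz0, hflow0]
      simpa using hε
    · -- 0 < z < x₀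
      have hzx₀ : z < x₀ := by
        have := mem_ball_iff_norm.mp hz
        rw [sub_zero, Real.norm_eq_abs, abs_of_pos hz0] at this
        exact this
      have hinv : (Nk p m' : ℝ) ≤ z ^ (-p⁻¹) := by
        have h1 : x₀ ^ (-p⁻¹) = (Nk p m' : ℝ) := by
          rw [hx₀, ← Real.rpow_mul hN0.le]
          rw [show -p * -p⁻¹ = 1 by field_simp, Real.rpow_one]
        rw [← h1]
        exact Real.rpow_le_rpow_of_nonpos hz0 hzx₀.le (by
          have : 0 < p⁻¹ := by positivity
          linarith)
      have hle : flow p z ≤ (2⁻¹:ℝ) ^ m' := by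
        rw [flow]
        exact hfun_tail hp hm'1 hinv
      have hge : 0 ≤ flow p z := by rw [flow]; exact hfun_nonneg _
      rw [Real.norm_eq_abs, abs_of_nonneg hge]
      linarith
  · -- 0 < x
    apply ContinuousAt.continuousWithinAt
    apply (hfun_continuous (p := p)).continuousAt.comp
    exact Real.continuousAt_rpow_const x _ (Or.inl (ne_of_gt hx0))

include hp in
lemma flow_uc : UniformContinuousOn (flow p) (Ap p) := by
  have h1 : UniformContinuousOn (flow p) (Set.Icc (0:ℝ) 1) :=
    isCompact_Icc.uniformContinuousOn_of_continuous (flow_continuousOn hp)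
  rw [UniformContinuousOn] at h1 ⊢
  apply h1.mono_left
  apply inf_le_inf_left
  apply Filter.principal_mono.mpr
  exact Set.prod_mono (Ap_subset_Icc hp) (Ap_subset_Icc hp)

end flowprops

section lowerdim
variable {p : ℝ} (hp : 1 < p)

include hp in
lemma boxes_subset {k : ℕ} (hk : 1 ≤ k) :
    (↑(({0} : Finset ℤ) ×ˢ Finset.Icc (0:ℤ) (Kk p k : ℤ)) : Set (ℤ × ℤ)) ⊆
      hitSet (dl p k) (graphOver (flow p) (Ap p)) := by
  have hp0 : p ≠ 0 := by intro h; rw [h] at hp; norm_num at hp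
  have hppos : (0:ℝ) < p := by linarith
  rintro ⟨i, j⟩ hij
  rw [Finset.coe_product, Set.mem_prod] at hij
  obtain ⟨hi, hj⟩ := hij
  simp only [Finset.coe_singleton, Set.mem_singleton_iff] at hi
  rw [Finset.coe_Icc, Set.mem_Icc] at hj
  subst hi
  set jn : ℕ := j.toNat with hjn
  have hjcast : (jn : ℤ) = j := Int.toNat_of_nonneg hj.1
  have hjK : jn ≤ Kk p k := by omega
  set n : ℕ := Nk p k + jn with hn
  have hn1 : 1 ≤ n := le_trans (Nk_pos (p := p) k) (Nat.le_add_right _ _)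
  have hnn0 : (0:ℝ) < (n:ℝ) := by exact_mod_cast hn1
  set x : ℝ := 1 / (n:ℝ) ^ p with hx
  have hxA : x ∈ Ap p := ⟨n, hn1, rfl⟩
  have hnpow : (0:ℝ) < (n:ℝ)^p := Real.rpow_pos_of_pos hnn0 _
  have hxpos : 0 < x := by rw [hx]; positivity
  -- x ≤ dl p k
  have hb : (2:ℝ) ^ (ak p k / p) ≤ (n:ℝ) := by
    refine le_trans (Nk_ge k) ?_
    exact_mod_cast Nat.le_add_right _ _
  have hpow2 : (2:ℝ) ^ (ak p k) ≤ (n:ℝ) ^ p := by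
    calc (2:ℝ) ^ (ak p k) = ((2:ℝ) ^ (ak p k / p)) ^ p := by
          rw [← Real.rpow_mul (by norm_num : (0:ℝ) ≤ 2), div_mul_cancel₀ _ hp0]
      _ ≤ (n:ℝ) ^ p := Real.rpow_le_rpow (by positivity) hb hppos.le
  have hxdl : x ≤ dl p k := by
    rw [hx, dl, Real.rpow_neg (by norm_num : (0:ℝ) ≤ 2), ← one_div]
    exact one_div_le_one_div_of_le (by positivity) hpow2
  -- flow value
  have hflow : flow p x = dl p k * (jn : ℝ) := by
    rw [hx, flow_eval hp hn1]
    have : ((n:ℕ) : ℝ) = (Nk p k : ℝ) + (jn : ℝ) := by rw [hn]; push_cast; ring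
    rw [this, hfun_eval hp hk hjK]
  refine ⟨(x, flow p x), ⟨?_, ?_⟩, hxA, rfl⟩
  · -- x in the 0-column
    constructor
    · dsimp only
      push_cast
      nlinarith
    · dsimp only
      push_cast
      calc x ≤ dl p k := hxdl
        _ = (0 + 1) * dl p k := by ring
  · -- flow value in box j
    have hjrn : (j : ℝ) = (jn : ℝ) := by exact_mod_cast hjcast.symm
    constructor
    · dsimp only
      rw [hflow, hjrn]
      nlinarith [dl_pos (p := p) (k := k)]
    · dsimp only
      rw [hflow, hjrn]
      nlinarith [dl_pos (p := p) (k := k)]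

include hp in
lemma count_lower {k : ℕ} (hk : 1 ≤ k) :
    (Kk p k : ℝ) + 1 ≤ (boxCount2 (dl p k) (graphOver (flow p) (Ap p)) : ℝ) := by
  have hfin : (hitSet (dl p k) (graphOver (flow p) (Ap p))).Finite :=
    hitSet_finite hp (flow p) 1 (fun x _ => flow_abs_le_one x) (dl_pos k)
  have hsub := boxes_subset hp (k := k) hk
  have h1 : ((({0} : Finset ℤ) ×ˢ Finset.Icc (0:ℤ) (Kk p k : ℤ)) : Finset (ℤ × ℤ)).card
      = Kk p k + 1 := by
    rw [Finset.card_product, Finset.card_singleton, one_mul, Int.card_Icc]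
    omega
  have h2 := Set.ncard_le_ncard hsub hfin
  rw [Set.ncard_coe_finset, h1] at h2
  rw [boxCount2_eq]
  exact_mod_cast h2

include hp in
lemma dim_ge_one : 1 ≤ upperBoxDim2 (graphOver (flow p) (Ap p)) := by
  rw [upperBoxDim2_eq_limsup]
  apply le_of_forall_pos_le_add
  intro ε hε
  have hbdd := isBoundedUnder_dimRatio hp (flow p) 1 (fun x _ => flow_abs_le_one x)
    (by norm_num)
  -- the sequence of scales tends to 0 from the right
  have hak : Tendsto (fun k : ℕ => ak p k) atTop atTop :=
    tendsto_pow_atTop_atTop_of_one_lt (by linarith : 1 < 2 * p)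
  have hdl0 : Tendsto (fun k : ℕ => dl p k) atTop (nhds 0) := by
    have h1 : Tendsto (fun k : ℕ => Real.log 2 * -(ak p k)) atTop atBot := by
      apply Filter.Tendsto.const_mul_atBot (Real.log_pos one_lt_two)
      exact tendsto_neg_atTop_atBot.comp hak
    have h2 := Real.tendsto_exp_atBot.comp h1
    have heq : (fun k : ℕ => dl p k) = fun k : ℕ => Real.exp (Real.log 2 * -(ak p k)) := by
      funext k
      rw [dl, Real.rpow_def_of_pos two_pos]
    rw [heq]
    exact h2
  have hdl : Tendsto (fun k : ℕ => dl p k) atTop (nhdsWithin (0:ℝ) (Set.Ioi 0)) :=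
    tendsto_nhdsWithin_of_tendsto_nhds_of_eventually_within _ hdl0
      (Filter.Eventually.of_forall (fun k => dl_pos k))
  -- eventually k / ak ≤ ε
  have hsum : Summable (fun n : ℕ => (n : ℝ) ^ 1 * ((2*p)⁻¹) ^ n) := by
    apply summable_pow_mul_geometric_of_norm_lt_one
    rw [Real.norm_eq_abs, abs_of_pos (by positivity : (0:ℝ) < (2*p)⁻¹)]
    rw [inv_lt_one_iff₀]
    right; linarith
  have htend0 : Tendsto (fun n : ℕ => (n : ℝ) ^ 1 * ((2*p)⁻¹) ^ n) atTop (nhds 0) :=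
    hsum.tendsto_atTop_zero
  have hratio : ∀ᶠ k : ℕ in atTop, (k : ℝ) / ak p k < ε := by
    have heq : ∀ k : ℕ, (k : ℝ) / ak p k = (k : ℝ) ^ 1 * ((2*p)⁻¹) ^ k := by
      intro k
      rw [pow_one, ak, div_eq_mul_inv, inv_pow]
    filter_upwards [htend0.eventually (gt_mem_nhds hε)] with k hk
    rw [heq k]
    exact hk
  have hfreq : ∀ᶠ k : ℕ in atTop, 1 - ε ≤ dimRatio (graphOver (flow p) (Ap p)) (dl p k) := by
    filter_upwards [hratio, eventually_ge_atTop 1] with k hkr hk1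
    have hak0 : 0 < ak p k := ak_pos hp k
    have hlog2 : 0 < Real.log 2 := Real.log_pos one_lt_two
    have hlogdl : -Real.log (dl p k) = ak p k * Real.log 2 := by
      rw [dl, Real.log_rpow two_pos]
      ring
    have hden : 0 < ak p k * Real.log 2 := by positivity
    have hcount := count_lower hp hk1
    have hcount2 : (2:ℝ) ^ (ak p k - k) ≤
        (boxCount2 (dl p k) (graphOver (flow p) (Ap p)) : ℝ) :=
      le_trans (Kk_gt k).le hcount
    have hlogcount : (ak p k - k) * Real.log 2 ≤
        Real.log (boxCount2 (dl p k) (graphOver (flow p) (Ap p))) := by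
      rw [← Real.log_rpow two_pos]
      exact Real.log_le_log (by positivity) hcount2
    have h5 : dimRatio (graphOver (flow p) (Ap p)) (dl p k)
        = Real.log (boxCount2 (dl p k) (graphOver (flow p) (Ap p))) /
          (ak p k * Real.log 2) := by
      rw [dimRatio, hlogdl]
    rw [h5]
    have h6 : ((ak p k - k) * Real.log 2) / (ak p k * Real.log 2) ≤
        Real.log (boxCount2 (dl p k) (graphOver (flow p) (Ap p))) /
          (ak p k * Real.log 2) :=
      div_le_div_of_nonneg_right hlogcount hden.le
    have h7 : ((ak p k - k) * Real.log 2) / (ak p k * Real.log 2) = 1 - (k : ℝ) / ak p k := by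
      rw [mul_div_mul_right _ _ (ne_of_gt hlog2), sub_div, div_self (ne_of_gt hak0)]
    rw [h7] at h6
    have h8 : 1 - ε ≤ 1 - (k : ℝ) / ak p k := by linarith
    linarith
  have hfreq2 : ∃ᶠ δ in nhdsWithin (0:ℝ) (Set.Ioi 0),
      1 - ε ≤ dimRatio (graphOver (flow p) (Ap p)) δ :=
    hdl.frequently hfreq.frequently
  have := le_limsup_of_frequently_le hfreq2 hbdd
  linarith
end lowerdim
end UGBDaux


/-- for `p > 1` and `A = {1/n^p : n ≥ 1}`, `gdim̄_B A = 1`. -/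
theorem upperGraphBoxDim_inv_npow_of_one_lt (p : ℝ) (hp : 1 < p) (A : Set ℝ)
    (hA : A = {x : ℝ | ∃ n : ℕ, 1 ≤ n ∧ x = 1 / (n : ℝ) ^ p}) :
    upperGraphBoxDim A = 1 := by
  subst hA
  have hAeq : {x : ℝ | ∃ n : ℕ, 1 ≤ n ∧ x = 1 / (n : ℝ) ^ p} = UGBDaux.Ap p := rfl
  rw [hAeq, upperGraphBoxDim]
  have hub : ∀ d ∈ {d : ℝ | ∃ f : ℝ → ℝ, MemCu f (UGBDaux.Ap p) ∧
      d = upperBoxDim2 (graphOver f (UGBDaux.Ap p))}, d ≤ 1 := by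
    rintro d ⟨f, ⟨huc, M, hM⟩, rfl⟩
    exact UGBDaux.dim2_le_one hp f (max M 0)
      (fun x hx => (hM x hx).trans (le_max_left _ _)) (le_max_right _ _)
  have hmem : (1:ℝ) ∈ {d : ℝ | ∃ f : ℝ → ℝ, MemCu f (UGBDaux.Ap p) ∧
      d = upperBoxDim2 (graphOver f (UGBDaux.Ap p))} := by
    refine ⟨UGBDaux.flow p, ⟨UGBDaux.flow_uc hp, 1,
      fun x _ => UGBDaux.flow_abs_le_one x⟩, ?_⟩
    have h1 := UGBDaux.dim2_le_one hp (UGBDaux.flow p) 1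
      (fun x _ => UGBDaux.flow_abs_le_one x) (by norm_num)
    have h2 := UGBDaux.dim_ge_one hp
    exact (le_antisymm h1 h2).symm
  exact le_antisymm (Real.sSup_le hub zero_le_one) (le_csSup ⟨1, fun d hd => hub d hd⟩ hmem)
end
end

section
/- Let X ⊆ [0,1] be a bounded set, let δ > 0, and let f, g ∈ C_u(X) with g(x) > 0 for all x ∈ X and sup_{x∈X} |g(x)| ≤ δ. Then N_δ(f+g) ≥ (1/2) · N_δ(f). -/
open Set Filter

noncomputable section

lemma gridSet_finite {δ : ℝ} (hδ : 0 < δ) (h : ℝ → ℝ) {X : Set ℝ}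
    (hX : X ⊆ Set.Icc 0 1) {M : ℝ} (hM : ∀ x ∈ X, |h x| ≤ M) :
    {p : ℤ × ℤ | ∃ x ∈ X,
      x ∈ Set.Ico ((p.1 : ℝ) * δ) ((p.1 + 1) * δ) ∧
      h x ∈ Set.Ico ((p.2 : ℝ) * δ) ((p.2 + 1) * δ)}.Finite := by
  apply Set.Finite.subset (Set.finite_Icc ((0 : ℤ), ⌊-M / δ⌋) (⌊1 / δ⌋, ⌊M / δ⌋))
  rintro ⟨i, j⟩ ⟨x, hx, ⟨h1, h2⟩, h3, h4⟩
  obtain ⟨hx0, hx1⟩ := hX hx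
  have hMx := hM x hx
  have hMl : -M ≤ h x := neg_le_of_abs_le hMx
  have hMr : h x ≤ M := le_of_abs_le hMx
  simp only [Set.mem_Icc, Prod.mk_le_mk]
  refine ⟨⟨?_, ?_⟩, ?_, ?_⟩
  · -- 0 ≤ i
    by_contra hc
    push_neg at hc
    have hi : ((i : ℝ) + 1) ≤ 0 := by
      have : i + 1 ≤ 0 := by omega
      exact_mod_cast this
    have := mul_nonpos_of_nonpos_of_nonneg hi hδ.le
    linarith
  · -- ⌊-M/δ⌋ ≤ j
      have h5 : -M / δ < (j : ℝ) + 1 := by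
        rw [div_lt_iff₀ hδ]; linarith
      have h6 : (⌊-M / δ⌋ : ℝ) < (j : ℝ) + 1 := lt_of_le_of_lt (Int.floor_le _) h5
      have : ⌊-M / δ⌋ < j + 1 := by exact_mod_cast h6
      omega
  · -- i ≤ ⌊1/δ⌋
    apply Int.le_floor.mpr
    rw [le_div_iff₀ hδ]; linarith
  · -- j ≤ ⌊M/δ⌋
    apply Int.le_floor.mpr
    rw [le_div_iff₀ hδ]; linarith

/-- if `g > 0` on `X` and `sup_{x ∈ X} |g x| ≤ δ`, then
`N_δ(f+g) ≥ (1/2) N_δ(f)`. -/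
theorem gridCount_add_ge_half (X : Set ℝ) (hX : X ⊆ Set.Icc 0 1) (δ : ℝ) (hδ : 0 < δ)
    (f g : ℝ → ℝ) (hf : MemCu f X) (hg : MemCu g X)
    (hgpos : ∀ x ∈ X, 0 < g x) (hgle : ∀ x ∈ X, |g x| ≤ δ) :
    (gridCountGraph δ (f + g) X : ℝ) ≥ (1 / 2) * gridCountGraph δ f X := by
  obtain ⟨-, M₁, hM₁⟩ := hf
  obtain ⟨-, M₂, hM₂⟩ := hg
  set S₁ : Set (ℤ × ℤ) := {p : ℤ × ℤ | ∃ x ∈ X,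
    x ∈ Set.Ico ((p.1 : ℝ) * δ) ((p.1 + 1) * δ) ∧
    f x ∈ Set.Ico ((p.2 : ℝ) * δ) ((p.2 + 1) * δ)} with hS₁
  set S₂ : Set (ℤ × ℤ) := {p : ℤ × ℤ | ∃ x ∈ X,
    x ∈ Set.Ico ((p.1 : ℝ) * δ) ((p.1 + 1) * δ) ∧
    (f + g) x ∈ Set.Ico ((p.2 : ℝ) * δ) ((p.2 + 1) * δ)} with hS₂
  have h₂fin : S₂.Finite := by
    apply gridSet_finite hδ (f + g) hX (M := M₁ + M₂)
    intro x hx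
    calc |(f + g) x| = |f x + g x| := rfl
      _ ≤ |f x| + |g x| := abs_add_le _ _
      _ ≤ M₁ + M₂ := add_le_add (hM₁ x hx) (hM₂ x hx)
  have hsub : S₁ ⊆ S₂ ∪ (fun p : ℤ × ℤ => (p.1, p.2 - 1)) '' S₂ := by
    rintro ⟨i, j⟩ ⟨x, hx, hxi, hf1, hf2⟩
    set j' : ℤ := ⌊(f x + g x) / δ⌋ with hj'
    have hgx := hgpos x hx
    have hgd : g x ≤ δ := le_of_abs_le (hgle x hx)
    have hfl : (j' : ℝ) * δ ≤ f x + g x := by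
      have := Int.floor_le ((f x + g x) / δ)
      calc (j' : ℝ) * δ ≤ (f x + g x) / δ * δ := by
            exact mul_le_mul_of_nonneg_right this hδ.le
        _ = f x + g x := div_mul_cancel₀ _ hδ.ne'
    have hfu : f x + g x < ((j' : ℝ) + 1) * δ := by
      have := Int.lt_floor_add_one ((f x + g x) / δ)
      calc f x + g x = (f x + g x) / δ * δ := (div_mul_cancel₀ _ hδ.ne').symm
        _ < ((j' : ℝ) + 1) * δ := by
            exact mul_lt_mul_of_pos_right this hδ
    have hmem : (i, j') ∈ S₂ := ⟨x, hx, hxi, hfl, hfu⟩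
    have hjl : j ≤ j' := by
      apply Int.le_floor.mpr
      rw [le_div_iff₀ hδ]; linarith
    have hju : j' ≤ j + 1 := by
      have : f x + g x < ((j : ℝ) + 1 + 1) * δ := by nlinarith
      have h7 : (j' : ℝ) < (j : ℝ) + 1 + 1 := by
        by_contra hc
        push_neg at hc
        have := mul_le_mul_of_nonneg_right hc hδ.le
        linarith
      have : j' < j + 1 + 1 := by exact_mod_cast h7
      omega
    rcases (by omega : j' = j ∨ j' = j + 1) with hc | hc
    · rw [hc] at hmem; exact Or.inl hmem
    · rw [hc] at hmem; exact Or.inr ⟨(i, j + 1), hmem, by simp⟩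
  have h₁fin : S₁.Finite :=
    (h₂fin.union (h₂fin.image _)).subset hsub
  have hle : S₁.ncard ≤ 2 * S₂.ncard := by
    calc S₁.ncard ≤ (S₂ ∪ (fun p : ℤ × ℤ => (p.1, p.2 - 1)) '' S₂).ncard :=
          Set.ncard_le_ncard hsub (h₂fin.union (h₂fin.image _))
      _ ≤ S₂.ncard + ((fun p : ℤ × ℤ => (p.1, p.2 - 1)) '' S₂).ncard :=
          Set.ncard_union_le _ _
      _ ≤ S₂.ncard + S₂.ncard :=
          Nat.add_le_add_left (Set.ncard_image_le h₂fin) _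
      _ = 2 * S₂.ncard := by ring
  have h1 : gridCountGraph δ f X = S₁.ncard := rfl
  have h2 : gridCountGraph δ (f + g) X = S₂.ncard := rfl
  rw [h1, h2]
  have : (S₁.ncard : ℝ) ≤ 2 * S₂.ncard := by exact_mod_cast hle
  linarith
end
end
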